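/- arXiv:1512.00427 — 6 statements merged into one kernel-verified Lean document; each statement's English description precedes it below -/
import Mathlib

section
/- Let G be a finite abelian group of order n and let S ⊆ G be an antisymmetric set (S ∩ (−S) = ∅). If a graph H admits a rainbow embedding into the arc-coloured Cayley digraph X = Cay(G,S), then the underlying (simple) graph of X contains n pairwise edge-disjoint copies of H. In particular, if H has exactly |S| edges, then H decomposes the underlying graph of X. -/
/-- The underlying simple graph of the Cayley digraph `Cay(G,S)` on an abelian group `G`:
`x` and `y` are adjacent iff they are distinct and one of `y - x`, `x - y` lies in `S`. -/
def caySimpleGraph {G : Type} [AddCommGroup G] (S : Set G) : SimpleGraph G where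
  Adj x y := x ≠ y ∧ (y - x ∈ S ∨ x - y ∈ S)
  symm := ⟨fun _ _ h => ⟨h.1.symm, h.2.symm⟩⟩
  loopless := ⟨fun _ h => h.1 rfl⟩

/-- A rainbow embedding of a graph `H` into the arc-coloured Cayley digraph `Cay(G,S)`:
an injective map on vertices such that every edge of `H`, suitably oriented, is mapped to an
arc of the Cayley digraph (i.e. the corresponding difference lies in `S`), and no two arcs of
the image carry the same colour (the colour of an arc `(x, x+s)` being `s`). -/
def IsRainbowEmb {V G : Type} [AddCommGroup G] (H : SimpleGraph V) (S : Set G)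
    (f : V → G) : Prop :=
  Function.Injective f ∧
  (∀ ⦃u v⦄, H.Adj u v → f u - f v ∈ S ∨ f v - f u ∈ S) ∧
  (∀ ⦃u v u' v'⦄, H.Adj u v → H.Adj u' v' → f v - f u ∈ S → f v' - f u' ∈ S →
    f v - f u = f v' - f u' → u = u' ∧ v = v')

/-- `H` decomposes `G`: `G` is the edge-disjoint union of isomorphic copies of `H`,
each copy being given by an injective homomorphism of `H` into `G`, and every edge of `G`
lying in exactly one copy. -/
def Decomposes {α β : Type} (H : SimpleGraph α) (G : SimpleGraph β) : Prop :=
  ∃ (ι : Type) (f : ι → α → β),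
    (∀ i, Function.Injective (f i)) ∧
    (∀ i a b, H.Adj a b → G.Adj (f i a) (f i b)) ∧
    (∀ e ∈ G.edgeSet, ∃! q : ι × Sym2 α, q.2 ∈ H.edgeSet ∧ Sym2.map (f q.1) q.2 = e)

/-- If a graph `H` admits a rainbow embedding into the Cayley digraph `Cay(G,S)` on a finite
abelian group `G` of order `n`, with `S` antisymmetric, then the underlying graph of `Cay(G,S)`
contains `n` pairwise edge-disjoint copies of `H`; in particular, if `H` has exactly `|S|`
edges, then `H` decomposes the underlying graph of `Cay(G,S)`. -/
theorem rainbow_embedding_gives_decomposition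
    {G : Type} [AddCommGroup G] [Fintype G] {V : Type} [Fintype V]
    (n : ℕ) (hn : Fintype.card G = n)
    (S : Finset G) (hS : ∀ s ∈ S, -s ∉ S)
    (H : SimpleGraph V) (f : V → G) (hf : IsRainbowEmb H (↑S) f) :
    (∃ c : Fin n → V → G,
      (∀ i, Function.Injective (c i)) ∧
      (∀ i a b, H.Adj a b → (caySimpleGraph (↑S : Set G)).Adj (c i a) (c i b)) ∧
      (∀ i j, i ≠ j →
        Disjoint (Sym2.map (c i) '' H.edgeSet) (Sym2.map (c j) '' H.edgeSet))) ∧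
    (H.edgeSet.ncard = S.card → Decomposes H (caySimpleGraph (↑S : Set G))) := by
  obtain ⟨hinj, hadjS, hrb⟩ := hf
  -- orientation lemma: every edge of H can be oriented so that its colour lies in S
  have horient : ∀ e ∈ H.edgeSet, ∃ u v, e = s(u, v) ∧ H.Adj u v ∧
      f v - f u ∈ (↑S : Set G) := by
    intro e he
    induction e with
    | h u v =>
      have hadj' : H.Adj u v := he
      rcases hadjS hadj' with h | h
      · exact ⟨v, u, Sym2.eq_swap.symm, hadj'.symm, h⟩
      · exact ⟨u, v, rfl, hadj', h⟩
  -- key uniqueness lemma for translated oriented edges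
  have hkey : ∀ (u v u' v' : V) (g g' : G), H.Adj u v → H.Adj u' v' →
      f v - f u ∈ (↑S : Set G) → f v' - f u' ∈ (↑S : Set G) →
      s(f u + g, f v + g) = s(f u' + g', f v' + g') → u = u' ∧ v = v' ∧ g = g' := by
    intro u v u' v' g g' h h' hs hs' heq
    rw [Sym2.eq_iff] at heq
    rcases heq with ⟨h1, h2⟩ | ⟨h1, h2⟩
    · have hdiff : f v - f u = f v' - f u' := by
        have : (f v + g) - (f u + g) = (f v' + g') - (f u' + g') := by rw [h1, h2]
        simpa using this
      obtain ⟨hu, hv⟩ := hrb h h' hs hs' hdiff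
      refine ⟨hu, hv, ?_⟩
      subst hu
      exact add_left_cancel h1
    · exfalso
      have hneg : f v' - f u' = -(f v - f u) := by
        have : (f v' + g') - (f u' + g') = -((f v + g) - (f u + g)) := by
          rw [← h1, ← h2]; abel
        simpa using this
      exact hS (f v - f u) hs (hneg ▸ hs')
  set g : Fin n ≃ G := (Fintype.equivFinOfCardEq hn).symm with hg
  set c : Fin n → V → G := fun i v => f v + g i with hc
  have hcinj : ∀ i, Function.Injective (c i) := by
    intro i a b hab
    exact hinj (add_right_cancel hab)
  have hcadj : ∀ i a b, H.Adj a b → (caySimpleGraph (↑S : Set G)).Adj (c i a) (c i b) := by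
    intro i a b hab
    refine ⟨fun h => hab.ne (hcinj i h), ?_⟩
    have : c i b - c i a = f b - f a := by simp [hc]
    have h2 : c i a - c i b = f a - f b := by simp [hc]
    rw [this, h2]
    exact (hadjS hab).symm.imp id id
  -- shape of a mapped edge
  have hmap : ∀ (i : Fin n) (e : Sym2 V), e ∈ H.edgeSet →
      ∃ u v, H.Adj u v ∧ f v - f u ∈ (↑S : Set G) ∧ e = s(u, v) ∧
        Sym2.map (c i) e = s(f u + g i, f v + g i) := by
    intro i e he
    obtain ⟨u, v, hev, hadj', hs⟩ := horient e he
    exact ⟨u, v, hadj', hs, hev, by rw [hev, Sym2.map_pair_eq]⟩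
  constructor
  · refine ⟨c, hcinj, hcadj, ?_⟩
    intro i j hij
    rw [Set.disjoint_left]
    rintro E ⟨e1, he1, hE1⟩ ⟨e2, he2, hE2⟩
    obtain ⟨u, v, h1, hs1, _, hm1⟩ := hmap i e1 he1
    obtain ⟨u', v', h2, hs2, _, hm2⟩ := hmap j e2 he2
    have : s(f u + g i, f v + g i) = s(f u' + g j, f v' + g j) := by
      rw [← hm1, ← hm2, hE1, hE2]
    obtain ⟨_, _, hgij⟩ := hkey u v u' v' (g i) (g j) h1 h2 hs1 hs2 this
    exact hij (g.injective hgij)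
  · intro hcard
    -- surjectivity of the colour map
    have hsurj : ∀ s ∈ S, ∃ u v, H.Adj u v ∧ f v - f u = s := by
      set C : Set G := {x | (∃ u v, H.Adj u v ∧ f v - f u = x) ∧ x ∈ (↑S : Set G)}
        with hC
      have hCS : C ⊆ ↑S := fun x hx => hx.2
      have hCfin : C.Finite := Set.toFinite C
      have h2 : ∀ e : H.edgeSet, ∃ p : V × V, (e : Sym2 V) = s(p.1, p.2) ∧
          H.Adj p.1 p.2 ∧ f p.2 - f p.1 ∈ (↑S : Set G) := by
        intro e
        obtain ⟨u, v, h1, h2, h3⟩ := horient e e.2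
        exact ⟨(u, v), h1, h2, h3⟩
      choose p hp1 hp2 hp3 using h2
      set χ : H.edgeSet → C := fun e =>
        ⟨f (p e).2 - f (p e).1, ⟨(p e).1, (p e).2, hp2 e, rfl⟩, hp3 e⟩ with hχ
      have hχinj : Function.Injective χ := by
        intro e e' hee
        have hval : f (p e).2 - f (p e).1 = f (p e').2 - f (p e').1 :=
          congrArg Subtype.val hee
        obtain ⟨h1, h2⟩ := hrb (hp2 e) (hp2 e') (hp3 e) (hp3 e') hval
        apply Subtype.ext
        rw [hp1 e, hp1 e', h1, h2]
      have hle1 : H.edgeSet.ncard ≤ C.ncard := by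
        rw [← Nat.card_coe_set_eq, ← Nat.card_coe_set_eq]
        exact Nat.card_le_card_of_injective χ hχinj
      have hle2 : (↑S : Set G).ncard ≤ C.ncard := by
        rw [Set.ncard_coe_finset, ← hcard]; exact hle1
      have hCeq : C = ↑S := Set.eq_of_subset_of_ncard_le hCS hle2 (Set.toFinite _)
      intro s hs
      have : s ∈ C := hCeq ▸ (Finset.mem_coe.mpr hs)
      exact this.1
    refine ⟨Fin n, c, hcinj, hcadj, ?_⟩
    intro E hE
    -- orient the Cayley edge
    obtain ⟨x, y, hExy, hyx⟩ : ∃ x y, E = s(x, y) ∧ y - x ∈ (↑S : Set G) := by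
      induction E with
      | h x y =>
        obtain ⟨hne, h | h⟩ := hE
        · exact ⟨x, y, rfl, h⟩
        · exact ⟨y, x, Sym2.eq_swap.symm, h⟩
    obtain ⟨u, v, huv, hfuv⟩ := hsurj (y - x) hyx
    have hfs : f v - f u ∈ (↑S : Set G) := by rw [hfuv]; exact hyx
    have hA : f u + (x - f u) = x := by abel
    have hB : f v + (x - f u) = y := by
      rw [sub_eq_iff_eq_add.mp hfuv]; abel
    have hxy : s(f u + (x - f u), f v + (x - f u)) = s(x, y) := by rw [hA, hB]
    refine ⟨(g.symm (x - f u), s(u, v)), ⟨huv, ?_⟩, ?_⟩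
    · show Sym2.map (c (g.symm (x - f u))) s(u, v) = E
      have hgi : g (g.symm (x - f u)) = x - f u := g.apply_symm_apply _
      rw [Sym2.map_pair_eq, hExy]
      show s(f u + g (g.symm (x - f u)), f v + g (g.symm (x - f u))) = s(x, y)
      rw [hgi, hxy]
    · rintro ⟨j, e'⟩ ⟨he', hmape⟩
      obtain ⟨u', v', h2, hs2, hev, hm2⟩ := hmap j e' he'
      have heq : s(f u' + g j, f v' + g j) = s(f u + (x - f u), f v + (x - f u)) := by
        rw [← hm2, hmape, hExy, hxy]
      obtain ⟨h1, h2', h3⟩ := hkey u' v' u v (g j) (x - f u) h2 huv hs2 hfs heq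
      have hj : j = g.symm (x - f u) := by
        apply g.injective
        rw [h3, g.apply_symm_apply]
      simp only [Prod.mk.injEq]
      exact ⟨hj, by rw [hev, h1, h2']⟩
end

section
/- Let p > 10 be a prime and let T be a tree with k edges where k < 3(p−1)/10. Then there exists an antisymmetric set S ⊆ Z_p \ {0} with |S| = k such that T admits a rainbow embedding into the arc-coloured Cayley digraph Cay(Z_p, S). -/
open SimpleGraph

lemma tree_exists_leaf {V : Type} [Fintype V] [DecidableEq V] {T : SimpleGraph V} (hT : T.IsTree)
    (h2 : 2 ≤ Fintype.card V) :
    ∃ v u : V, T.Adj v u ∧ ∀ w, T.Adj v w → w = u := by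
  obtain ⟨r⟩ := hT.isConnected.nonempty
  have hP : ∀ x : V, ∃ p : T.Walk r x, p.IsPath := fun x => (hT.existsUnique_path r x).exists
  choose P hPp using hP
  have huniq : ∀ (x : V) (q : T.Walk r x), q.IsPath → q = P x := fun x q hq =>
    (hT.existsUnique_path r x).unique hq (hPp x)
  obtain ⟨v, -, hmax⟩ := Finset.exists_max_image Finset.univ (fun x => (P x).length)
    ⟨r, Finset.mem_univ r⟩
  have hmax : ∀ x, (P x).length ≤ (P v).length := fun x => hmax x (Finset.mem_univ x)
  have hvlen : 0 < (P v).length := by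
    obtain ⟨x, hx⟩ := Fintype.exists_ne_of_one_lt_card (by omega) r
    have : 0 < (P x).length := by
      rcases Nat.eq_zero_or_pos (P x).length with h | h
      · exact absurd (SimpleGraph.Walk.eq_of_length_eq_zero h) (Ne.symm hx)
      · exact h
    exact lt_of_lt_of_le this (hmax x)
  have hrevlen : 0 < (P v).reverse.length := by rwa [SimpleGraph.Walk.length_reverse]
  refine ⟨v, (P v).reverse.getVert 1, ?_, ?_⟩
  · have := (P v).reverse.adj_getVert_succ hrevlen
    simpa using this
  · intro w hw
    have hvw : v ≠ w := hw.ne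
    by_cases hmem : v ∈ (P w).support
    · exfalso
      have ht : ((P w).takeUntil v hmem).IsPath := (hPp w).takeUntil hmem
      have htq : (P w).takeUntil v hmem = P v := huniq v _ ht
      have hlen : (P w).length
          = ((P w).takeUntil v hmem).length + ((P w).dropUntil v hmem).length := by
        conv_lhs => rw [← SimpleGraph.Walk.take_spec (P w) hmem]
        rw [SimpleGraph.Walk.length_append]
      have hdrop : 0 < ((P w).dropUntil v hmem).length := by
        rcases Nat.eq_zero_or_pos ((P w).dropUntil v hmem).length with h | h
        · exact absurd (SimpleGraph.Walk.eq_of_length_eq_zero h) hvw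
        · exact h
      have := hmax w
      rw [hlen, htq] at this
      omega
    · set q : T.Walk r v := (P w).concat hw.symm with hq
      have hqrev : q.reverse = SimpleGraph.Walk.cons hw.symm.symm (P w).reverse :=
        SimpleGraph.Walk.reverse_concat (P w) hw.symm
      have hqpath : q.IsPath := by
        rw [← SimpleGraph.Walk.isPath_reverse_iff, hqrev]
        exact ((hPp w).reverse).cons (by simpa using hmem)
      have hqP : q = P v := huniq v q hqpath
      have : q.reverse.getVert 1 = w := by
        rw [hqrev, SimpleGraph.Walk.getVert_cons_succ, SimpleGraph.Walk.getVert_zero]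
      rw [hqP] at this
      exact this.symm


lemma path_avoids_leaf {V : Type} [DecidableEq V] {T : SimpleGraph V} {v u : V}
    (hadj : T.Adj v u) (hleaf : ∀ w, T.Adj v w → w = u)
    {a b : V} (ha : a ≠ v) (hb : b ≠ v) (p : T.Walk a b) (hp : p.IsPath) :
    v ∉ p.support := by
  intro hmem
  set t := p.takeUntil v hmem with htdef
  set q := p.dropUntil v hmem with hqdef
  have ht : t.IsPath := hp.takeUntil hmem
  have hq : q.IsPath := hp.dropUntil hmem
  have htlen : 0 < t.length := by
    rcases Nat.eq_zero_or_pos t.length with h | h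
    · exact absurd (SimpleGraph.Walk.eq_of_length_eq_zero h) ha
    · exact h
  have hqlen : 0 < q.length := by
    rcases Nat.eq_zero_or_pos q.length with h | h
    · exact absurd (SimpleGraph.Walk.eq_of_length_eq_zero h) (Ne.symm hb)
    · exact h
  -- u is in t.support
  have hut : u ∈ t.support := by
    have hrl : 0 < t.reverse.length := by rwa [SimpleGraph.Walk.length_reverse]
    have hadj1 : T.Adj v (t.reverse.getVert 1) := by
      have := t.reverse.adj_getVert_succ hrl
      simpa using this
    have := hleaf _ hadj1
    have hmem1 : t.reverse.getVert 1 ∈ t.reverse.support :=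
      SimpleGraph.Walk.mem_support_iff_exists_getVert.mpr ⟨1, rfl, hrl⟩
    rw [this] at hmem1
    rwa [SimpleGraph.Walk.support_reverse, List.mem_reverse] at hmem1
  -- u in q.support.tail
  have huq : u ∈ q.support.tail := by
    have hadj2 : T.Adj v (q.getVert 1) := by
      have := q.adj_getVert_succ hqlen
      simpa using this
    have h2 := hleaf _ hadj2
    have hmem2 : q.getVert 1 ∈ q.support :=
      SimpleGraph.Walk.mem_support_iff_exists_getVert.mpr ⟨1, rfl, hqlen⟩
    rw [h2] at hmem2
    rw [q.support_eq_cons] at hmem2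
    rcases List.mem_cons.mp hmem2 with h | h
    · exact absurd h hadj.ne'
    · exact h
  have hnd : (t.support ++ q.support.tail).Nodup := by
    rw [← SimpleGraph.Walk.support_append, SimpleGraph.Walk.take_spec]
    exact hp.support_nodup
  exact (List.disjoint_of_nodup_append hnd) hut huq

lemma delete_leaf_isTree {V : Type} [DecidableEq V] {T : SimpleGraph V} (hT : T.IsTree)
    {v u : V} (hadj : T.Adj v u) (hleaf : ∀ w, T.Adj v w → w = u) :
    (T.comap (Subtype.val : {x : V // x ≠ v} → V)).IsTree := by
  set T' := T.comap (Subtype.val : {x : V // x ≠ v} → V) with hT'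
  have lift : ∀ {a b : V} (p : T.Walk a b), v ∉ p.support →
      ∀ (ha : a ≠ v) (hb : b ≠ v), T'.Reachable ⟨a, ha⟩ ⟨b, hb⟩ := by
    intro a b p
    induction p with
    | nil => intro _ ha hb; rfl
    | @cons a c b h q ih =>
      intro hnv ha hb
      rw [SimpleGraph.Walk.support_cons, List.mem_cons] at hnv
      push_neg at hnv
      have hc : _ ≠ v := fun hh => hnv.2 (hh ▸ q.start_mem_support)
      have h' : T'.Adj ⟨a, ha⟩ ⟨_, hc⟩ := h
      exact h'.reachable.trans (ih hnv.2 hc hb)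
  constructor
  · haveI : Nonempty {x : V // x ≠ v} := ⟨⟨u, hadj.ne'⟩⟩
    apply SimpleGraph.Connected.mk
    intro a b
    obtain ⟨w⟩ := hT.isConnected.preconnected a.1 b.1
    have hp := w.toPath.2
    have havoid := path_avoids_leaf hadj hleaf a.2 b.2 w.toPath.1 hp
    have := lift w.toPath.1 havoid a.2 b.2
    simpa using this
  · intro a c hc
    have : (c.map ⟨Subtype.val, fun h => h⟩).IsCycle :=
      hc.map Subtype.val_injective
    exact hT.IsAcyclic _ this

lemma main_aux (p : ℕ) (hp : p.Prime) (hp10 : 10 < p) :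
    ∀ (n : ℕ) (V : Type) [Fintype V] [DecidableEq V] (T : SimpleGraph V),
      Fintype.card V = n → T.IsTree → 3 * n ≤ p + 1 →
      ∃ S : Finset (ZMod p),
        (∀ s ∈ S, s ≠ 0) ∧ (∀ s ∈ S, -s ∉ S) ∧ S.card = n - 1 ∧
        ∃ f : V → ZMod p, IsRainbowEmb T (↑S) f := by
  intro n
  induction n with
  | zero =>
    intro V _ _ T hcard hT _
    exact absurd hT.isConnected.nonempty (not_nonempty_iff.mpr (Fintype.card_eq_zero_iff.mp hcard))
  | succ n ih =>
    intro V _ _ T hcard hT hbound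
    by_cases hn : n = 0
    · subst hn
      haveI : Subsingleton V := Fintype.card_le_one_iff_subsingleton.mp (by omega)
      refine ⟨∅, by simp, by simp, by simp, fun _ => 0, fun a b _ => Subsingleton.elim a b,
        fun a b hadj => absurd (Subsingleton.elim a b) hadj.ne, fun a b a' b' hadj _ _ _ _ =>
          absurd (Subsingleton.elim a b) hadj.ne⟩
    · obtain ⟨v, u, hadj, hleaf⟩ := tree_exists_leaf hT (by omega)
      set T' := T.comap (Subtype.val : {x : V // x ≠ v} → V) with hT'def
      have hT'tree := delete_leaf_isTree hT hadj hleaf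
      have hcard' : Fintype.card {x : V // x ≠ v} = n := by
        rw [Fintype.card_subtype_compl, Fintype.card_subtype_eq, hcard]
        omega
      obtain ⟨S', h0', hanti', hScard', f', hinj', hedge', hrb'⟩ :=
        ih {x : V // x ≠ v} T' hcard' hT'tree (by omega)
      set u0 : {x : V // x ≠ v} := ⟨u, hadj.ne'⟩ with hu0def
      haveI : NeZero p := ⟨by omega⟩
      set F : Finset (ZMod p) := (Finset.univ.image f') ∪ S'.image (fun s => f' u0 + s) ∪
        S'.image (fun s => f' u0 - s) with hFdef
      have hFcard : F.card < p := by
        have h1 : (Finset.univ.image f').card ≤ n := by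
          calc (Finset.univ.image f').card ≤ (Finset.univ : Finset {x : V // x ≠ v}).card :=
                Finset.card_image_le
          _ = n := by rw [Finset.card_univ, hcard']
        have h2 : (S'.image (fun s => f' u0 + s)).card ≤ n - 1 :=
          le_trans Finset.card_image_le (le_of_eq hScard')
        have h3 : (S'.image (fun s => f' u0 - s)).card ≤ n - 1 :=
          le_trans Finset.card_image_le (le_of_eq hScard')
        have h4 := Finset.card_union_le ((Finset.univ.image f') ∪ S'.image (fun s => f' u0 + s))
          (S'.image (fun s => f' u0 - s))
        have h5 := Finset.card_union_le (Finset.univ.image f') (S'.image (fun s => f' u0 + s))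
        rw [← hFdef] at h4
        omega
      have hex : ∃ c, c ∉ F := by
        by_contra h
        push_neg at h
        have hsub : (Finset.univ : Finset (ZMod p)) ⊆ F := fun x _ => h x
        have := Finset.card_le_card hsub
        rw [Finset.card_univ, ZMod.card] at this
        omega
      obtain ⟨c, hc⟩ := hex
      have hcimg : ∀ x, c ≠ f' x := by
        intro x hx
        exact hc (Finset.mem_union_left _ (Finset.mem_union_left _
          (Finset.mem_image.mpr ⟨x, Finset.mem_univ x, hx.symm⟩)))
      have hcplus : ∀ s ∈ S', c ≠ f' u0 + s := by
        intro s hs hx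
        exact hc (Finset.mem_union_left _ (Finset.mem_union_right _
          (Finset.mem_image.mpr ⟨s, hs, hx.symm⟩)))
      have hcminus : ∀ s ∈ S', c ≠ f' u0 - s := by
        intro s hs hx
        exact hc (Finset.mem_union_right _ (Finset.mem_image.mpr ⟨s, hs, hx.symm⟩))
      set d0 : ZMod p := c - f' u0 with hd0def
      have hd0 : d0 ≠ 0 := sub_ne_zero.mpr (hcimg u0)
      have hd0S' : d0 ∉ S' := fun h => hcplus _ h (by rw [hd0def]; ring)
      have hnd0S' : -d0 ∉ S' := fun h => hcminus _ h (by rw [hd0def]; ring)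
      have hd0nself : -d0 ≠ d0 := by
        intro h
        haveI : Fact p.Prime := ⟨hp⟩
        have h2 : (2 : ZMod p) * d0 = 0 := by rw [two_mul]; nth_rewrite 1 [← h]; ring
        rcases mul_eq_zero.mp h2 with h' | h'
        · have : ((2 : ℕ) : ZMod p) = 0 := by exact_mod_cast h'
          rw [ZMod.natCast_eq_zero_iff] at this
          have := Nat.le_of_dvd (by norm_num) this
          omega
        · exact hd0 h'
      set S : Finset (ZMod p) := insert d0 S' with hSdef
      have hScard : S.card = (n + 1) - 1 := by
        rw [hSdef, Finset.card_insert_of_notMem hd0S', hScard']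
        omega
      set f : V → ZMod p := fun x => if h : x = v then c else f' ⟨x, h⟩ with hfdef
      have hfv : f v = c := by simp [hfdef]
      have hfx : ∀ (x : V) (hx : x ≠ v), f x = f' ⟨x, hx⟩ := by
        intro x hx; simp [hfdef, hx]
      -- membership conversions
      have hmemS : ∀ z : ZMod p, z ∈ (↑S : Set (ZMod p)) ↔ z = d0 ∨ z ∈ S' := by
        intro z; simp [hSdef]
      -- odd edge classification
      have hdiff : ∀ a b : V, T.Adj a b → f b - f a ∈ (↑S : Set (ZMod p)) →
          (∃ (ha : a ≠ v) (hb : b ≠ v), f' ⟨b, hb⟩ - f' ⟨a, ha⟩ ∈ S') ∨ (a = u ∧ b = v) := by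
        intro a b hab hmem
        by_cases hb : b = v
        · right
          have hav : T.Adj v a := by rw [← hb]; exact hab.symm
          exact ⟨hleaf a hav, hb⟩
        · by_cases ha : a = v
          · exfalso
            have hbu : b = u := hleaf b (by rw [← ha]; exact hab)
            have hfa : f a = c := by rw [ha, hfv]
            rw [hfx b hb, hfa] at hmem
            have hbb : (⟨b, hb⟩ : {x : V // x ≠ v}) = u0 := by
              rw [hu0def]; exact Subtype.ext hbu
            have heq2 : f' (⟨b, hb⟩ : {x : V // x ≠ v}) - c = -d0 := by
              rw [hbb, hd0def]; ring
            rw [heq2, hmemS] at hmem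
            rcases hmem with h | h
            · exact hd0nself h
            · exact hnd0S' h
          · left
            refine ⟨ha, hb, ?_⟩
            rw [hfx b hb, hfx a ha] at hmem
            rw [hmemS] at hmem
            rcases hmem with h | h
            · exfalso
              have hadj' : T'.Adj ⟨a, ha⟩ ⟨b, hb⟩ := hab
              rcases hedge' hadj' with h' | h'
              · rw [Finset.mem_coe] at h'
                -- f' ⟨a⟩ - f' ⟨b⟩ ∈ S' and f' ⟨b⟩ - f' ⟨a⟩ = d0
                apply hnd0S'
                rw [← h]
                have : -(f' (⟨b, hb⟩ : {x : V // x ≠ v}) - f' ⟨a, ha⟩)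
                    = f' (⟨a, ha⟩ : {x : V // x ≠ v}) - f' ⟨b, hb⟩ := by ring
                rw [this]
                exact h'
              · rw [Finset.mem_coe] at h'
                exact hd0S' (h ▸ h')
            · exact h
      refine ⟨S, ?_, ?_, hScard, f, ?_, ?_, ?_⟩
      · intro s hs
        rcases Finset.mem_insert.mp hs with h | h
        · exact h ▸ hd0
        · exact h0' s h
      · intro s hs hns
        rcases Finset.mem_insert.mp hs with h | h
        · subst h
          rcases Finset.mem_insert.mp hns with h' | h'
          · exact hd0nself h'
          · exact hnd0S' h'
        · rcases Finset.mem_insert.mp hns with h' | h'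
          · apply hnd0S'
            rw [← h']
            simpa using h
          · exact hanti' s h h'
      · -- injectivity
        intro x y hxy
        by_cases hx : x = v <;> by_cases hy : y = v
        · rw [hx, hy]
        · exfalso
          rw [hx] at hxy
          rw [hfv, hfx y hy] at hxy
          exact hcimg _ hxy
        · exfalso
          rw [hy] at hxy
          rw [hfv, hfx x hx] at hxy
          exact hcimg _ hxy.symm
        · rw [hfx x hx, hfx y hy] at hxy
          have := hinj' hxy
          exact congrArg Subtype.val this
      · -- edges
        intro a b hab
        by_cases hb : b = v
        · right
          have hau : a = u := hleaf a (by rw [← hb]; exact hab.symm)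
          have hane : a ≠ v := fun h => hab.ne (h.trans hb.symm)
          have h1 : f b = c := by rw [hb, hfv]
          have h2 : f a = f' u0 := by
            rw [hfx a hane]; exact congrArg f' (Subtype.ext (by simpa [hu0def] using hau))
          rw [h1, h2, hmemS]
          exact Or.inl hd0def.symm
        · by_cases ha : a = v
          · left
            have hbu : b = u := hleaf b (by rw [← ha]; exact hab)
            have h1 : f a = c := by rw [ha, hfv]
            have h2 : f b = f' u0 := by
              rw [hfx b hb]; exact congrArg f' (Subtype.ext (by simpa [hu0def] using hbu))
            rw [h1, h2, hmemS]
            exact Or.inl hd0def.symm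
          · have hadj' : T'.Adj ⟨a, ha⟩ ⟨b, hb⟩ := hab
            rcases hedge' hadj' with h | h
            · left
              rw [hfx a ha, hfx b hb, hmemS]
              right
              rwa [Finset.mem_coe] at h
            · right
              rw [hfx a ha, hfx b hb, hmemS]
              right
              rwa [Finset.mem_coe] at h
      · -- rainbow
        intro a b a' b' hab hab' hm hm' heq
        rcases hdiff a b hab hm with ⟨ha, hb, hS1⟩ | ⟨hau, hbv⟩ <;>
          rcases hdiff a' b' hab' hm' with ⟨ha', hb', hS2⟩ | ⟨hau', hbv'⟩
        · rw [hfx a ha, hfx b hb, hfx a' ha', hfx b' hb'] at heq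
          have hadj1 : T'.Adj ⟨a, ha⟩ ⟨b, hb⟩ := hab
          have hadj2 : T'.Adj ⟨a', ha'⟩ ⟨b', hb'⟩ := hab'
          have := hrb' hadj1 hadj2 (Finset.mem_coe.mpr hS1) (Finset.mem_coe.mpr hS2) heq
          exact ⟨congrArg Subtype.val this.1, congrArg Subtype.val this.2⟩
        · exfalso
          have hb'c : f b' = c := by rw [hbv', hfv]
          have ha'ne : a' ≠ v := fun h => hab'.ne (h.trans hbv'.symm)
          have ha'eq : f a' = f' u0 := by
            rw [hfx a' ha'ne]; exact congrArg f' (Subtype.ext (by simpa [hu0def] using hau'))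
          rw [hfx a ha, hfx b hb, hb'c, ha'eq] at heq
          apply hd0S'
          rw [hd0def]
          exact heq ▸ hS1
        · exfalso
          have hbc : f b = c := by rw [hbv, hfv]
          have hane : a ≠ v := fun h => hab.ne (h.trans hbv.symm)
          have haeq : f a = f' u0 := by
            rw [hfx a hane]; exact congrArg f' (Subtype.ext (by simpa [hu0def] using hau))
          rw [hfx a' ha', hfx b' hb', hbc, haeq] at heq
          apply hd0S'
          rw [hd0def]
          exact heq.symm ▸ hS2
        · exact ⟨hau.trans hau'.symm, hbv.trans hbv'.symm⟩

/-- Let `p > 10` be a prime and `T` a tree with `k < 3(p-1)/10` edges. Then there is an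
antisymmetric set `S ⊆ ℤ_p \ {0}` with `|S| = k` such that `T` admits a rainbow embedding
into `Cay(ℤ_p, S)`. -/
theorem tree_rainbow_embedding_in_cayley
    (p k : ℕ) (hp : p.Prime) (hp10 : 10 < p)
    {V : Type} [Fintype V] (T : SimpleGraph V) (hT : T.IsTree)
    (hk : T.edgeSet.ncard = k) (hk' : 10 * k < 3 * (p - 1)) :
    ∃ S : Finset (ZMod p),
      (∀ s ∈ S, s ≠ 0) ∧ (∀ s ∈ S, -s ∉ S) ∧ S.card = k ∧
      ∃ f : V → ZMod p, IsRainbowEmb T (↑S) f := by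
  classical
  have hef : T.edgeFinset.card + 1 = Fintype.card V := hT.card_edgeFinset
  have hkk : T.edgeFinset.card = k := by
    rw [← hk, SimpleGraph.edgeFinset, Set.ncard_eq_toFinset_card']
  have hcard : Fintype.card V = k + 1 := by omega
  have hbound : 3 * (k + 1) ≤ p + 1 := by omega
  obtain ⟨S, h1, h2, h3, f, hf⟩ := main_aux p hp hp10 (k + 1) V T hcard hT hbound
  exact ⟨S, h1, h2, by simpa using h3, f, hf⟩
end

section
/- Let T be a tree with k edges, let x_0, x_1, …, x_k be a peeling ordering of V(T), and label the edges by variables y_1, …, y_k so that the edge labelled y_i joins x_i to the subtree T[x_0,…,x_{i−1}] for 1 ≤ i ≤ k. For 1 ≤ i ≤ k let T(0,i) be the set of indices j such that the edge labelled y_j lies on the unique path in T from x_0 to x_i. Let p be a prime and consider the polynomial P(y_1,…,y_k) = ∏_{1≤i<j≤k} (y_j² − y_i²) · ∏_{1≤i<j≤k} (Σ_{r∈T(0,i)} y_r − Σ_{s∈T(0,j)} y_s) over the field F_p. Then the coefficient in P of the monomial y_k^{3(k−1)} · y_{k−1}^{3(k−2)} ⋯ y_2^{3} · y_1^{0} equals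 ±1; in particular it is nonzero in F_p. -/
open MvPolynomial Finset

namespace PeelAux

variable {R : Type*} [CommRing R] {σ : Type*} [DecidableEq σ]

/-- `f` has `j`-degree at most `e`, and the only possible monomial of `f` with `j`-degree
exactly `e` is `single j e`, whose coefficient is `c`. -/
def TopAt (j : σ) (e : ℕ) (c : R) (f : MvPolynomial σ R) : Prop :=
  (∀ d ∈ f.support, d j ≤ e) ∧
    ∀ d : σ →₀ ℕ, d j = e → f.coeff d = if d = Finsupp.single j e then c else 0

lemma topAt_one (j : σ) : TopAt j 0 (1 : R) 1 := by
  have h1 : ∀ d : σ →₀ ℕ, (1 : MvPolynomial σ R).coeff d = if d = 0 then 1 else 0 := by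
    intro d
    rw [MvPolynomial.coeff_one]
    by_cases h : d = 0 <;> simp [h, eq_comm]
  constructor
  · intro d hd
    rw [MvPolynomial.mem_support_iff, h1] at hd
    by_cases h : d = 0
    · simp [h]
    · rw [if_neg h] at hd; exact absurd rfl hd
  · intro d _
    rw [h1, Finsupp.single_zero]

lemma topAt_mul {j : σ} {e₁ e₂ : ℕ} {c₁ c₂ : R} {f g : MvPolynomial σ R}
    (hf : TopAt j e₁ c₁ f) (hg : TopAt j e₂ c₂ g) :
    TopAt j (e₁ + e₂) (c₁ * c₂) (f * g) := by
  have key : ∀ d : σ →₀ ℕ, d j = e₁ + e₂ →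
      ∀ x ∈ Finset.HasAntidiagonal.antidiagonal d, x ≠ (Finsupp.single j e₁, Finsupp.single j e₂) →
      f.coeff x.1 * g.coeff x.2 = 0 := by
    intro d hd x hx hne
    by_contra hnz
    have h1 : f.coeff x.1 ≠ 0 := left_ne_zero_of_mul hnz
    have h2 : g.coeff x.2 ≠ 0 := right_ne_zero_of_mul hnz
    have hx1 : x.1 j ≤ e₁ := hf.1 _ (MvPolynomial.mem_support_iff.mpr h1)
    have hx2 : x.2 j ≤ e₂ := hg.1 _ (MvPolynomial.mem_support_iff.mpr h2)
    have hsum : x.1 + x.2 = d := Finset.HasAntidiagonal.mem_antidiagonal.mp hx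
    have hj : x.1 j + x.2 j = e₁ + e₂ := by
      rw [← hd, ← hsum, Finsupp.add_apply]
    have he1 : x.1 j = e₁ := by omega
    have he2 : x.2 j = e₂ := by omega
    have hx1e : x.1 = Finsupp.single j e₁ := by
      by_contra h; rw [hf.2 x.1 he1, if_neg h] at h1; exact h1 rfl
    have hx2e : x.2 = Finsupp.single j e₂ := by
      by_contra h; rw [hg.2 x.2 he2, if_neg h] at h2; exact h2 rfl
    exact hne (by rw [Prod.ext_iff]; exact ⟨hx1e, hx2e⟩)
  constructor
  · intro d hd
    rw [MvPolynomial.mem_support_iff, MvPolynomial.coeff_mul] at hd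
    obtain ⟨x, hx, hxne⟩ := Finset.exists_ne_zero_of_sum_ne_zero hd
    have hsum := Finset.HasAntidiagonal.mem_antidiagonal.mp hx
    have hx1 : x.1 j ≤ e₁ :=
      hf.1 _ (MvPolynomial.mem_support_iff.mpr (left_ne_zero_of_mul hxne))
    have hx2 : x.2 j ≤ e₂ :=
      hg.1 _ (MvPolynomial.mem_support_iff.mpr (right_ne_zero_of_mul hxne))
    calc d j = x.1 j + x.2 j := by rw [← hsum, Finsupp.add_apply]
    _ ≤ e₁ + e₂ := add_le_add hx1 hx2
  · intro d hd
    rw [MvPolynomial.coeff_mul]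
    by_cases hdd : d = Finsupp.single j (e₁ + e₂)
    · rw [if_pos hdd,
        Finset.sum_eq_single_of_mem (Finsupp.single j e₁, Finsupp.single j e₂)]
      · rw [hf.2 _ (by simp), hg.2 _ (by simp), if_pos rfl, if_pos rfl]
      · rw [Finset.HasAntidiagonal.mem_antidiagonal, ← Finsupp.single_add, hdd]
      · intro x hx hne; exact key d hd x hx hne
    · rw [if_neg hdd]
      apply Finset.sum_eq_zero
      intro x hx
      apply key d hd x hx
      rintro rfl
      apply hdd
      rw [← Finset.HasAntidiagonal.mem_antidiagonal.mp hx, ← Finsupp.single_add]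

lemma topAt_prod {ι : Type*} {j : σ} (s : Finset ι) (e : ι → ℕ) (c : ι → R)
    (F : ι → MvPolynomial σ R) (h : ∀ t ∈ s, TopAt j (e t) (c t) (F t)) :
    TopAt j (∑ t ∈ s, e t) (∏ t ∈ s, c t) (∏ t ∈ s, F t) := by
  induction s using Finset.cons_induction with
  | empty => simpa using topAt_one j
  | cons a s ha ih =>
    rw [Finset.prod_cons, Finset.sum_cons, Finset.prod_cons]
    exact topAt_mul (h a (Finset.mem_cons_self a s))
      (ih fun t ht => h t (Finset.mem_cons_of_mem ht))

lemma coeff_mul_topAt {j : σ} {n : ℕ} {c : R} {f g : MvPolynomial σ R}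
    (hf : ∀ u ∈ f.support, u j = 0) (hg : TopAt j n c g)
    (d : σ →₀ ℕ) (hd : d j = 0) :
    (f * g).coeff (d + Finsupp.single j n) = f.coeff d * c := by
  rw [MvPolynomial.coeff_mul, Finset.sum_eq_single_of_mem (d, Finsupp.single j n)]
  · rw [hg.2 _ (by simp), if_pos rfl]
  · rw [Finset.HasAntidiagonal.mem_antidiagonal]
  · intro x hx hne
    by_contra hnz
    have h1 := left_ne_zero_of_mul hnz
    have h2 := right_ne_zero_of_mul hnz
    have hx1 : x.1 j = 0 := hf _ (MvPolynomial.mem_support_iff.mpr h1)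
    have hsum := Finset.HasAntidiagonal.mem_antidiagonal.mp hx
    have hj : x.1 j + x.2 j = n := by
      have := congrArg (fun z : σ →₀ ℕ => z j) hsum
      simpa [Finsupp.add_apply, hd] using this
    have hx2 : x.2 j = n := by omega
    have hx2e : x.2 = Finsupp.single j n := by
      by_contra h; rw [hg.2 x.2 hx2, if_neg h] at h2; exact h2 rfl
    have hx1e : x.1 = d := by
      have h' := hsum; rw [hx2e] at h'; exact add_right_cancel h'
    exact hne (by rw [Prod.ext_iff]; exact ⟨hx1e, hx2e⟩)

lemma topAt_X_sq_sub {j i : σ} (h : i ≠ j) :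
    TopAt j 2 (1 : R) ((X j : MvPolynomial σ R) ^ 2 - X i ^ 2) := by
  have hc : ∀ d : σ →₀ ℕ, ((X j : MvPolynomial σ R) ^ 2 - X i ^ 2).coeff d =
      (if Finsupp.single j 2 = d then (1:R) else 0)
        - if Finsupp.single i 2 = d then (1:R) else 0 := by
    intro d; rw [MvPolynomial.coeff_sub, MvPolynomial.coeff_X_pow, MvPolynomial.coeff_X_pow]
  have hij : (Finsupp.single i 2 : σ →₀ ℕ) j = 0 := by
    rw [Finsupp.single_apply, if_neg h]
  constructor
  · intro d hd
    rw [MvPolynomial.mem_support_iff, hc] at hd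
    by_cases h1 : Finsupp.single j 2 = d
    · rw [← h1]; simp
    by_cases h2 : Finsupp.single i 2 = d
    · rw [← h2, hij]; omega
    · rw [if_neg h1, if_neg h2, sub_zero] at hd; exact absurd rfl hd
  · intro d hd
    rw [hc]
    by_cases h1 : d = Finsupp.single j 2
    · have h2 : ¬ (Finsupp.single i 2 : σ →₀ ℕ) = d := by
        intro hcon
        have h2' : (Finsupp.single i 2 : σ →₀ ℕ) j = d j := by rw [hcon]
        rw [hij] at h2'
        omega
      rw [if_pos h1.symm, if_neg h2, if_pos h1, sub_zero]
    · have h2 : ¬ (Finsupp.single i 2 : σ →₀ ℕ) = d := by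
        intro hcon; rw [← hcon, hij] at hd; omega
      rw [if_neg (fun hh => h1 hh.symm), if_neg h2, if_neg h1, sub_zero]

lemma topAt_sum_sub {j : σ} {B C : Finset σ} (hB : j ∉ B) (hC : j ∈ C) :
    TopAt j 1 (-1 : R) ((∑ r ∈ B, (X r : MvPolynomial σ R)) - ∑ s ∈ C, X s) := by
  have hc : ∀ d : σ →₀ ℕ,
      ((∑ r ∈ B, (X r : MvPolynomial σ R)) - ∑ s ∈ C, X s).coeff d =
      (∑ r ∈ B, if Finsupp.single r 1 = d then (1:R) else 0)
        - ∑ s ∈ C, if Finsupp.single s 1 = d then (1:R) else 0 := by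
    intro d
    rw [MvPolynomial.coeff_sub, MvPolynomial.coeff_sum, MvPolynomial.coeff_sum]
    simp only [MvPolynomial.coeff_X']
  constructor
  · intro d hd
    rw [MvPolynomial.mem_support_iff, hc] at hd
    have hex : ∃ r : σ, Finsupp.single r 1 = d := by
      have hor : (∑ r ∈ B, if Finsupp.single r 1 = d then (1:R) else 0) ≠ 0 ∨
          (∑ s ∈ C, if Finsupp.single s 1 = d then (1:R) else 0) ≠ 0 := by
        by_contra hcon
        push_neg at hcon
        rw [hcon.1, hcon.2, sub_zero] at hd
        exact hd rfl
      rcases hor with h | h <;>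
      · obtain ⟨r, _, hr⟩ := Finset.exists_ne_zero_of_sum_ne_zero h
        refine ⟨r, ?_⟩
        by_contra hcon
        rw [if_neg hcon] at hr
        exact hr rfl
    obtain ⟨r, hr⟩ := hex
    rw [← hr, Finsupp.single_apply]
    split <;> omega
  · intro d hd
    rw [hc]
    by_cases h1 : d = Finsupp.single j 1
    · rw [if_pos h1]
      have hBsum : (∑ r ∈ B, if Finsupp.single r 1 = d then (1:R) else 0) = 0 := by
        apply Finset.sum_eq_zero
        intro r hr
        rw [if_neg]
        intro hcon
        have : r = j :=
          Finsupp.single_left_injective one_ne_zero (hcon.trans h1)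
        exact hB (this ▸ hr)
      have hCsum : (∑ s ∈ C, if Finsupp.single s 1 = d then (1:R) else 0) = 1 := by
        rw [Finset.sum_eq_single_of_mem j hC]
        · rw [if_pos h1.symm]
        · intro b hb hbj
          rw [if_neg]
          intro hcon
          exact hbj (Finsupp.single_left_injective one_ne_zero (hcon.trans h1))
      rw [hBsum, hCsum]
      ring
    · rw [if_neg h1]
      have hz : ∀ r : σ, ¬ (Finsupp.single r 1 = d) := by
        intro r hcon
        by_cases hr : r = j
        · exact h1 ((hr ▸ hcon).symm)
        · have : (Finsupp.single r 1 : σ →₀ ℕ) j = d j := by rw [hcon]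
          rw [Finsupp.single_apply, if_neg hr, hd] at this
          omega
      rw [Finset.sum_eq_zero (fun r _ => if_neg (hz r)),
        Finset.sum_eq_zero (fun r _ => if_neg (hz r)), sub_zero]

noncomputable def peelP (p k : ℕ) (A : Fin (k+1) → Finset (Fin (k+1))) (m : ℕ) :
    MvPolynomial (Fin (k+1)) (ZMod p) :=
  (∏ q ∈ Finset.univ.filter
      (fun q : Fin (k+1) × Fin (k+1) => q.1 ≠ 0 ∧ q.1 < q.2 ∧ q.2.val ≤ m),
    ((X q.2 : MvPolynomial (Fin (k+1)) (ZMod p)) ^ 2 - X q.1 ^ 2)) *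
  (∏ q ∈ Finset.univ.filter
      (fun q : Fin (k+1) × Fin (k+1) => q.1 ≠ 0 ∧ q.1 < q.2 ∧ q.2.val ≤ m),
    ((∑ r ∈ A q.1, X r) - ∑ s ∈ A q.2, X s))

noncomputable def peelD (k m : ℕ) : Fin (k+1) →₀ ℕ :=
  ∑ i ∈ Finset.univ.filter (fun i : Fin (k+1) => i.val ≤ m),
    Finsupp.single i (3 * (i.val - 1))

lemma peel_vars (p k : ℕ) [Nontrivial (ZMod p)] (A : Fin (k+1) → Finset (Fin (k+1)))
    (hAle : ∀ i r : Fin (k+1), r ∈ A i → r ≤ i) (m : ℕ) :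
    ∀ i ∈ (peelP p k A m).vars, i.val ≤ m := by
  intro i hi
  unfold peelP at hi
  have hmem := MvPolynomial.vars_mul _ _ hi
  rw [Finset.mem_union] at hmem
  rcases hmem with h | h
  · have h' := MvPolynomial.vars_prod _ h
    rw [Finset.mem_biUnion] at h'
    obtain ⟨q, hq, hiq⟩ := h'
    obtain ⟨-, hlt, hle⟩ := (Finset.mem_filter.mp hq).2
    have hsub : ((X q.2 : MvPolynomial (Fin (k+1)) (ZMod p)) ^ 2 - X q.1 ^ 2).vars
        ⊆ {q.2} ∪ {q.1} :=
      (MvPolynomial.vars_sub_subset _).trans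
        (Finset.union_subset_union
          ((MvPolynomial.vars_pow _ _).trans (by rw [MvPolynomial.vars_X]))
          ((MvPolynomial.vars_pow _ _).trans (by rw [MvPolynomial.vars_X])))
    rcases Finset.mem_union.mp (hsub hiq) with h' | h' <;>
      rw [Finset.mem_singleton] at h'
    · exact h' ▸ hle
    · have h2 : q.1.val < q.2.val := hlt
      have h3 : i.val = q.1.val := congrArg Fin.val h'
      omega
  · have h' := MvPolynomial.vars_prod _ h
    rw [Finset.mem_biUnion] at h'
    obtain ⟨q, hq, hiq⟩ := h'
    obtain ⟨-, hlt, hle⟩ := (Finset.mem_filter.mp hq).2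
    have hsumvars : ∀ B : Finset (Fin (k+1)),
        (∑ r ∈ B, (X r : MvPolynomial (Fin (k+1)) (ZMod p))).vars ⊆ B := by
      intro B
      refine (MvPolynomial.vars_sum_subset _ _).trans ?_
      intro x hx
      rw [Finset.mem_biUnion] at hx
      obtain ⟨r, hr, hxr⟩ := hx
      rw [MvPolynomial.vars_X, Finset.mem_singleton] at hxr
      exact hxr ▸ hr
    have hsub : (((∑ r ∈ A q.1, X r) - ∑ s ∈ A q.2, X s) :
        MvPolynomial (Fin (k+1)) (ZMod p)).vars ⊆ A q.1 ∪ A q.2 :=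
      (MvPolynomial.vars_sub_subset _).trans
        (Finset.union_subset_union (hsumvars _) (hsumvars _))
    rcases Finset.mem_union.mp (hsub hiq) with h' | h'
    · have h1 : i ≤ q.1 := hAle _ _ h'
      have h2 : q.1.val < q.2.val := hlt
      have h3 : i.val ≤ q.1.val := h1
      omega
    · have h1 : i ≤ q.2 := hAle _ _ h'
      have h3 : i.val ≤ q.2.val := h1
      omega

lemma peel_main (p k : ℕ) [Nontrivial (ZMod p)] (A : Fin (k+1) → Finset (Fin (k+1)))
    (hAle : ∀ i r : Fin (k+1), r ∈ A i → r ≤ i)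
    (hAself : ∀ j : Fin (k+1), j ≠ 0 → j ∈ A j) :
    ∀ m, m ≤ k → (peelP p k A m).coeff (peelD k m) = 1 ∨
      (peelP p k A m).coeff (peelD k m) = -1 := by
  intro m
  induction m with
  | zero =>
    intro _
    left
    have hfe : (Finset.univ.filter
        (fun q : Fin (k+1) × Fin (k+1) => q.1 ≠ 0 ∧ q.1 < q.2 ∧ q.2.val ≤ 0)) = ∅ := by
      rw [Finset.filter_eq_empty_iff]
      rintro q - ⟨h1, h2, h3⟩
      have : q.2 = 0 := Fin.ext (by omega)
      rw [this] at h2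
      exact Fin.not_lt_zero _ h2
    have hD0 : peelD k 0 = 0 := by
      unfold peelD
      apply Finset.sum_eq_zero
      intro i hi
      have h1 : i.val ≤ 0 := (Finset.mem_filter.mp hi).2
      have h2 : 3 * (i.val - 1) = 0 := by omega
      rw [h2, Finsupp.single_zero]
    unfold peelP
    rw [hfe, hD0]
    simp
  | succ m ih =>
    intro hm
    have hmk : m ≤ k := by omega
    set j : Fin (k+1) := ⟨m+1, by omega⟩ with hj
    have hjval : j.val = m + 1 := rfl
    -- split the pair set
    set S2 : Finset (Fin (k+1) × Fin (k+1)) := Finset.univ.filter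
      (fun q : Fin (k+1) × Fin (k+1) => q.1 ≠ 0 ∧ q.1 < q.2 ∧ q.2 = j) with hS2
    have hsplit : (Finset.univ.filter
        (fun q : Fin (k+1) × Fin (k+1) => q.1 ≠ 0 ∧ q.1 < q.2 ∧ q.2.val ≤ m+1)) =
        (Finset.univ.filter
          (fun q : Fin (k+1) × Fin (k+1) => q.1 ≠ 0 ∧ q.1 < q.2 ∧ q.2.val ≤ m)) ∪ S2 := by
      ext q
      simp only [hS2, Finset.mem_union, Finset.mem_filter, Finset.mem_univ, true_and]
      constructor
      · rintro ⟨h1, h2, h3⟩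
        by_cases h4 : q.2.val ≤ m
        · exact Or.inl ⟨h1, h2, h4⟩
        · exact Or.inr ⟨h1, h2, Fin.ext (by omega)⟩
      · rintro (⟨h1, h2, h3⟩ | ⟨h1, h2, h3⟩)
        · exact ⟨h1, h2, by omega⟩
        · refine ⟨h1, h2, ?_⟩
          have : q.2.val = m + 1 := by rw [h3]
          omega
    have hdisj : Disjoint (Finset.univ.filter
        (fun q : Fin (k+1) × Fin (k+1) => q.1 ≠ 0 ∧ q.1 < q.2 ∧ q.2.val ≤ m)) S2 := by
      rw [Finset.disjoint_left]
      intro q hq1 hq2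
      have h1 : q.2.val ≤ m := (Finset.mem_filter.mp hq1).2.2.2
      have h2 : q.2 = j := (Finset.mem_filter.mp hq2).2.2.2
      have : q.2.val = m + 1 := by rw [h2]
      omega
    -- cardinality of S2
    have hcard : S2.card = m := by
      have hmap : S2 = (Finset.Ioo (0 : Fin (k+1)) j).map
          ⟨fun i => (i, j), fun a b hab => congrArg Prod.fst hab⟩ := by
        ext q
        simp only [hS2, Finset.mem_map, Finset.mem_filter, Finset.mem_univ, true_and,
          Finset.mem_Ioo, Function.Embedding.coeFn_mk]
        constructor
        · rintro ⟨h1, h2, h3⟩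
          exact ⟨q.1, ⟨Fin.pos_iff_ne_zero.mpr h1, h3 ▸ h2⟩, by rw [← h3]; rfl⟩
        · rintro ⟨i, ⟨hi0, hij⟩, rfl⟩
          exact ⟨Fin.pos_iff_ne_zero.mp hi0, hij, rfl⟩
      rw [hmap, Finset.card_map, Fin.card_Ioo]
      simp [hjval]
    -- TopAt for the new factors
    have hj0 : j ≠ 0 := by
      intro hcon
      have : j.val = 0 := by rw [hcon]; rfl
      omega
    have hV : TopAt j (∑ _q ∈ S2, 2) (∏ _q ∈ S2, (1 : ZMod p))
        (∏ q ∈ S2, ((X q.2 : MvPolynomial (Fin (k+1)) (ZMod p)) ^ 2 - X q.1 ^ 2)) := by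
      apply topAt_prod
      intro q hq
      obtain ⟨-, h2, h3⟩ := (Finset.mem_filter.mp hq).2
      rw [h3]
      exact topAt_X_sq_sub (ne_of_lt (h3 ▸ h2))
    have hW : TopAt j (∑ _q ∈ S2, 1) (∏ _q ∈ S2, (-1 : ZMod p))
        (∏ q ∈ S2, (((∑ r ∈ A q.1, X r) - ∑ s ∈ A q.2, X s) :
          MvPolynomial (Fin (k+1)) (ZMod p))) := by
      apply topAt_prod
      intro q hq
      obtain ⟨h1, h2, h3⟩ := (Finset.mem_filter.mp hq).2
      rw [h3]
      apply topAt_sum_sub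
      · intro hcon
        have h4 : j ≤ q.1 := hAle _ _ hcon
        have h5 : q.1 < j := h3 ▸ h2
        exact absurd (lt_of_le_of_lt h4 h5) (lt_irrefl j)
      · exact hAself j hj0
    have hG := topAt_mul hV hW
    rw [Finset.sum_const, Finset.sum_const, Finset.prod_const_one, Finset.prod_const,
      hcard, smul_eq_mul, smul_eq_mul, mul_one, one_mul] at hG
    have h3m : m * 2 + m = 3 * m := by ring
    rw [h3m] at hG
    -- support of peelP m avoids j
    have hjP : ∀ u ∈ (peelP p k A m).support, u j = 0 := by
      intro u hu
      by_contra hne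
      have hjv : j ∈ (peelP p k A m).vars :=
        (MvPolynomial.mem_vars _).mpr ⟨u, hu, Finsupp.mem_support_iff.mpr hne⟩
      have := peel_vars p k A hAle m j hjv
      omega
    -- peelD splits
    have hDj : (peelD k m) j = 0 := by
      unfold peelD
      rw [Finsupp.finset_sum_apply]
      apply Finset.sum_eq_zero
      intro i hi
      have h1 : i.val ≤ m := (Finset.mem_filter.mp hi).2
      rw [Finsupp.single_apply, if_neg]
      intro hcon
      have : i.val = m + 1 := by rw [hcon]
      omega
    have hDsplit : peelD k (m+1) = peelD k m + Finsupp.single j (3 * m) := by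
      unfold peelD
      have hins : Finset.univ.filter (fun i : Fin (k+1) => i.val ≤ m+1) =
          insert j (Finset.univ.filter (fun i : Fin (k+1) => i.val ≤ m)) := by
        ext i
        simp only [Finset.mem_insert, Finset.mem_filter, Finset.mem_univ, true_and]
        constructor
        · intro h
          by_cases h2 : i.val ≤ m
          · exact Or.inr h2
          · exact Or.inl (Fin.ext (by omega))
        · rintro (rfl | h)
          · omega
          · omega
      rw [hins, Finset.sum_insert (by
        rw [Finset.mem_filter]
        rintro ⟨-, hcon⟩
        rw [hjval] at hcon
        omega)]
      have h31 : 3 * (j.val - 1) = 3 * m := by rw [hjval]; omega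
      rw [h31]
      exact add_comm _ _
    -- peelP splits
    have hPsplit : peelP p k A (m+1) = peelP p k A m *
        ((∏ q ∈ S2, ((X q.2 : MvPolynomial (Fin (k+1)) (ZMod p)) ^ 2 - X q.1 ^ 2)) *
         (∏ q ∈ S2, (((∑ r ∈ A q.1, X r) - ∑ s ∈ A q.2, X s) :
            MvPolynomial (Fin (k+1)) (ZMod p)))) := by
      unfold peelP
      rw [hsplit, Finset.prod_union hdisj, Finset.prod_union hdisj]
      ring
    have hcoeff : (peelP p k A (m+1)).coeff (peelD k (m+1)) =
        (peelP p k A m).coeff (peelD k m) * (-1 : ZMod p) ^ m := by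
      rw [hPsplit, hDsplit]
      exact coeff_mul_topAt hjP hG (peelD k m) hDj
    rcases ih hmk with h | h <;> rcases neg_one_pow_eq_or (ZMod p) m with h2 | h2
    · left; rw [hcoeff, h, h2, one_mul]
    · right; rw [hcoeff, h, h2, one_mul]
    · right; rw [hcoeff, h, h2, mul_one]
    · left; rw [hcoeff, h, h2]; ring

end PeelAux


/-- Let `T` be a tree with `k` edges whose vertices `0, 1, …, k` are listed in a peeling
ordering (every initial segment induces a subtree).  For `i ≠ 0` let `π i` be the (unique)
earlier neighbour of `i`, so that the edge labelled `y_i` is `{π i, i}`, and let `A i` be the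
set of indices `j` such that the edge `y_j` lies on the unique path of `T` from `0` to `i`.
Consider the polynomial
`P = ∏_{1 ≤ i < j ≤ k} (y_j² − y_i²) · ∏_{1 ≤ i < j ≤ k} (∑_{r ∈ A i} y_r − ∑_{s ∈ A j} y_s)`
over `F_p`.  Then the coefficient of the monomial `y_k^{3(k−1)} y_{k−1}^{3(k−2)} ⋯ y_1^0`
in `P` equals `±1`; in particular it is nonzero in `F_p`. -/
theorem peeling_polynomial_coeff
    (p k : ℕ) (hp : p.Prime)
    (T : SimpleGraph (Fin (k + 1))) (hT : T.IsTree)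
    (hpeel : ∀ t : Fin (k + 1), (T.induce {x | x ≤ t}).Connected)
    (π : Fin (k + 1) → Fin (k + 1))
    (hπ : ∀ i : Fin (k + 1), i ≠ 0 → π i < i ∧ T.Adj (π i) i)
    (A : Fin (k + 1) → Finset (Fin (k + 1)))
    (hA : ∀ i j : Fin (k + 1),
      j ∈ A i ↔ (j ≠ 0 ∧ ∀ q : T.Path 0 i, s(π j, j) ∈ q.val.edges)) :
    (((∏ q ∈ Finset.univ.filter
          (fun q : Fin (k + 1) × Fin (k + 1) => q.1 ≠ 0 ∧ q.1 < q.2),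
            ((X q.2 : MvPolynomial (Fin (k + 1)) (ZMod p)) ^ 2 - X q.1 ^ 2)) *
        (∏ q ∈ Finset.univ.filter
          (fun q : Fin (k + 1) × Fin (k + 1) => q.1 ≠ 0 ∧ q.1 < q.2),
            ((∑ r ∈ A q.1, X r) - ∑ s ∈ A q.2, X s))).coeff
        (∑ i : Fin (k + 1), Finsupp.single i (3 * (i.val - 1))) = 1 ∨
      ((∏ q ∈ Finset.univ.filter
          (fun q : Fin (k + 1) × Fin (k + 1) => q.1 ≠ 0 ∧ q.1 < q.2),
            ((X q.2 : MvPolynomial (Fin (k + 1)) (ZMod p)) ^ 2 - X q.1 ^ 2)) *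
        (∏ q ∈ Finset.univ.filter
          (fun q : Fin (k + 1) × Fin (k + 1) => q.1 ≠ 0 ∧ q.1 < q.2),
            ((∑ r ∈ A q.1, X r) - ∑ s ∈ A q.2, X s))).coeff
        (∑ i : Fin (k + 1), Finsupp.single i (3 * (i.val - 1))) = -1) ∧
    ((∏ q ∈ Finset.univ.filter
          (fun q : Fin (k + 1) × Fin (k + 1) => q.1 ≠ 0 ∧ q.1 < q.2),
            ((X q.2 : MvPolynomial (Fin (k + 1)) (ZMod p)) ^ 2 - X q.1 ^ 2)) *
        (∏ q ∈ Finset.univ.filter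
          (fun q : Fin (k + 1) × Fin (k + 1) => q.1 ≠ 0 ∧ q.1 < q.2),
            ((∑ r ∈ A q.1, X r) - ∑ s ∈ A q.2, X s))).coeff
        (∑ i : Fin (k + 1), Finsupp.single i (3 * (i.val - 1))) ≠ 0 := by
  haveI : Fact (1 < p) := ⟨hp.one_lt⟩
  -- Walks within initial segments of the peeling order
  have hwalk : ∀ (t a b : Fin (k+1)), a ≤ t → b ≤ t →
      ∃ w : T.Walk a b, ∀ x ∈ w.support, x ≤ t := by
    intro t a b ha hb
    obtain ⟨w⟩ := (hpeel t).preconnected ⟨a, ha⟩ ⟨b, hb⟩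
    refine ⟨w.map (SimpleGraph.Embedding.induce {x : Fin (k+1) | x ≤ t}).toHom, ?_⟩
    intro x hx
    have hx' := SimpleGraph.Walk.support_map (SimpleGraph.Embedding.induce {x : Fin (k+1) | x ≤ t}).toHom w
    replace hx : x ∈ List.map (SimpleGraph.Embedding.induce (G := T) {x : Fin (k+1) | x ≤ t}).toHom w.support := by
      rw [← hx']; exact hx
    obtain ⟨y, hy, rfl⟩ := List.mem_map.mp hx
    exact y.2
  have hpath : ∀ i : Fin (k+1), ∃ q : T.Path 0 i, ∀ x ∈ q.val.support, x ≤ i := by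
    intro i
    obtain ⟨w, hw⟩ := hwalk i 0 i (Fin.zero_le i) le_rfl
    exact ⟨w.toPath, fun x hx => hw x (SimpleGraph.Walk.support_toPath_subset w hx)⟩
  have hAle : ∀ i r : Fin (k+1), r ∈ A i → r ≤ i := by
    intro i r hr
    obtain ⟨hr0, hrq⟩ := (hA i r).mp hr
    obtain ⟨q, hq⟩ := hpath i
    exact hq r (SimpleGraph.Walk.snd_mem_support_of_mem_edges q.val (hrq q))
  have huniq : ∀ j a : Fin (k+1), j ≠ 0 → T.Adj a j → a < j → a = π j := by
    intro j a hj0 hadj haj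
    obtain ⟨hπlt, hπadj⟩ := hπ j hj0
    by_contra hne
    have hjval : 0 < j.val := by
      rcases Nat.eq_zero_or_pos j.val with h | h
      · exact absurd (Fin.ext h) hj0
      · exact h
    set t : Fin (k+1) := ⟨j.val - 1, by omega⟩ with ht
    have htval : t.val = j.val - 1 := rfl
    have hat : a ≤ t := by
      rw [Fin.le_def, htval]
      have := Fin.lt_def.mp haj
      omega
    have hπt : π j ≤ t := by
      rw [Fin.le_def, htval]
      have := Fin.lt_def.mp hπlt
      omega
    obtain ⟨w, hw⟩ := hwalk t a (π j) hat hπt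
    have hjw : j ∉ w.toPath.val.support := by
      intro hcon
      have h1 := hw j (SimpleGraph.Walk.support_toPath_subset w hcon)
      have h2 := Fin.le_def.mp h1
      rw [htval] at h2
      omega
    have hp2 : (SimpleGraph.Walk.cons hadj
        ((SimpleGraph.Walk.cons hπadj.symm SimpleGraph.Walk.nil) : T.Walk j (π j))).IsPath := by
      rw [SimpleGraph.Walk.isPath_def]
      simp only [SimpleGraph.Walk.support_cons, SimpleGraph.Walk.support_nil]
      simp [List.nodup_cons, hadj.ne, hne, hπadj.ne']
    have hup := hT.IsAcyclic.path_unique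
      (⟨_, hp2⟩ : T.Path a (π j)) w.toPath
    apply hjw
    have hval : (SimpleGraph.Walk.cons hadj
        (SimpleGraph.Walk.cons hπadj.symm SimpleGraph.Walk.nil)) = w.toPath.val :=
      congrArg Subtype.val hup
    rw [← hval]
    simp [SimpleGraph.Walk.support_cons]
  have hAself : ∀ j : Fin (k+1), j ≠ 0 → j ∈ A j := by
    intro j hj0
    rw [hA]
    refine ⟨hj0, ?_⟩
    intro q
    obtain ⟨q0, hq0⟩ := hpath j
    rw [hT.IsAcyclic.path_unique q q0]
    obtain ⟨x, hadj, w', hw'⟩ := SimpleGraph.Walk.exists_eq_cons_of_ne hj0 q0.val.reverse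
    have hedge : s(j, x) ∈ q0.val.edges := by
      have h1 : s(j, x) ∈ q0.val.reverse.edges := by
        rw [hw', SimpleGraph.Walk.edges_cons]
        exact List.mem_cons_self
      rwa [SimpleGraph.Walk.edges_reverse, List.mem_reverse] at h1
    have hxle : x ≤ j := hq0 x (SimpleGraph.Walk.snd_mem_support_of_mem_edges q0.val hedge)
    have hxlt : x < j := lt_of_le_of_ne hxle hadj.ne'
    have hxπ : x = π j := huniq j x hj0 hadj.symm hxlt
    rw [← hxπ, Sym2.eq_swap]
    exact hedge
  -- assemble
  have hfilter : (Finset.univ.filter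
      (fun q : Fin (k+1) × Fin (k+1) => q.1 ≠ 0 ∧ q.1 < q.2)) =
      Finset.univ.filter
      (fun q : Fin (k+1) × Fin (k+1) => q.1 ≠ 0 ∧ q.1 < q.2 ∧ q.2.val ≤ k) := by
    apply Finset.filter_congr
    intro q _
    constructor
    · rintro ⟨h1, h2⟩
      exact ⟨h1, h2, Nat.lt_succ_iff.mp q.2.isLt⟩
    · rintro ⟨h1, h2, -⟩
      exact ⟨h1, h2⟩
  have hD : (∑ i : Fin (k+1), Finsupp.single i (3 * (i.val - 1))) = PeelAux.peelD k k := by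
    unfold PeelAux.peelD
    rw [Finset.filter_true_of_mem (fun i _ => Nat.lt_succ_iff.mp i.isLt)]
  have hP : ((∏ q ∈ Finset.univ.filter
          (fun q : Fin (k + 1) × Fin (k + 1) => q.1 ≠ 0 ∧ q.1 < q.2),
            ((X q.2 : MvPolynomial (Fin (k + 1)) (ZMod p)) ^ 2 - X q.1 ^ 2)) *
        (∏ q ∈ Finset.univ.filter
          (fun q : Fin (k + 1) × Fin (k + 1) => q.1 ≠ 0 ∧ q.1 < q.2),
            ((∑ r ∈ A q.1, X r) - ∑ s ∈ A q.2, X s))) = PeelAux.peelP p k A k := by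
    unfold PeelAux.peelP
    rw [hfilter]
  rw [hP, hD]
  have key := PeelAux.peel_main p k A hAle hAself k le_rfl
  refine ⟨key, ?_⟩
  rcases key with h | h <;> rw [h]
  · exact one_ne_zero
  · exact neg_ne_zero.mpr one_ne_zero
end

section
/- Let p be a prime and k < p. For every sequence a_1, …, a_k of elements of Z_p (repetitions allowed) and every set {b_1, …, b_k} of k distinct elements of Z_p, there exists a permutation σ of {1, …, k} such that the sums a_1 + b_{σ(1)}, …, a_k + b_{σ(k)} are pairwise distinct. -/
open Polynomial Finset

lemma nodal_weight_pow_sum {F : Type*} [Field F] [DecidableEq F] (S : Finset F) (e : ℕ)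
    (he : e < S.card) :
    ∑ y ∈ S, y ^ e * Lagrange.nodalWeight S id y
      = if e = S.card - 1 then 1 else 0 := by
  have hinj : Set.InjOn (id : F → F) S := Set.injOn_id _
  have hdeg : (X ^ e : F[X]).degree < S.card := by
    rw [degree_X_pow]; exact_mod_cast he
  have h1 : (X ^ e : F[X]) = Lagrange.interpolate S id (fun y => y ^ e) := by
    have := Lagrange.eq_interpolate hinj hdeg
    convert this using 2
    funext y
    simp
  have h2 := congrArg (fun P : F[X] => P.coeff (S.card - 1)) h1
  simp only [Lagrange.interpolate_apply] at h2
  rw [coeff_X_pow, Polynomial.finset_sum_coeff] at h2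
  have h3 : ∀ y ∈ S, (C (y ^ e) * Lagrange.basis S id y).coeff (S.card - 1)
      = y ^ e * Lagrange.nodalWeight S id y := by
    intro y hy
    rw [Polynomial.coeff_C_mul, Lagrange.basis_eq_prod_sub_inv_mul_nodal_div hy,
      ← Lagrange.nodal_erase_eq_nodal_div hy, Polynomial.coeff_C_mul]
    have hm : (Lagrange.nodal (S.erase y) (id : F → F)).natDegree = S.card - 1 := by
      rw [Lagrange.natDegree_nodal, Finset.card_erase_of_mem hy]
    have := (Lagrange.nodal_monic (s := S.erase y) (v := (id : F → F))).coeff_natDegree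
    rw [hm] at this
    rw [this, mul_one]
  rw [Finset.sum_congr rfl h3] at h2
  rw [← h2]
  simp only [eq_comm]

open MvPolynomial in
lemma coeff_eq_sum_grid {F : Type*} [Field F] [DecidableEq F] {n : ℕ}
    (f : MvPolynomial (Fin n) F) (t : Fin n → ℕ) (S : Fin n → Finset F)
    (hS : ∀ i, (S i).card = t i + 1) (hf : f.totalDegree ≤ ∑ i, t i) :
    MvPolynomial.coeff (Finsupp.equivFunOnFinite.symm t) f
      = ∑ x ∈ Fintype.piFinset S, MvPolynomial.eval x f
          * ∏ i, Lagrange.nodalWeight (S i) id (x i) := by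
  set m : Fin n →₀ ℕ := Finsupp.equivFunOnFinite.symm t with hm
  have hmi : ∀ i, m i = t i := fun i => rfl
  -- expand evaluations
  have hexp : ∀ x : Fin n → F, MvPolynomial.eval x f
      = ∑ d ∈ f.support, MvPolynomial.coeff d f * ∏ i, x i ^ (d i) :=
    fun x => MvPolynomial.eval_eq' x f
  symm
  calc ∑ x ∈ Fintype.piFinset S, MvPolynomial.eval x f
          * ∏ i, Lagrange.nodalWeight (S i) id (x i)
      = ∑ d ∈ f.support, MvPolynomial.coeff d f *
          ∑ x ∈ Fintype.piFinset S, ∏ i, (x i ^ (d i) * Lagrange.nodalWeight (S i) id (x i)) := by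
        have hptw : ∀ x ∈ Fintype.piFinset S, MvPolynomial.eval x f
            * ∏ i, Lagrange.nodalWeight (S i) id (x i)
            = ∑ d ∈ f.support, MvPolynomial.coeff d f
                * ∏ i, (x i ^ (d i) * Lagrange.nodalWeight (S i) id (x i)) := by
          intro x _
          rw [hexp x, Finset.sum_mul]
          refine Finset.sum_congr rfl fun d _ => ?_
          rw [mul_assoc, Finset.prod_mul_distrib]
        rw [Finset.sum_congr rfl hptw, Finset.sum_comm]
        refine Finset.sum_congr rfl fun d _ => ?_
        rw [Finset.mul_sum]
    _ = ∑ d ∈ f.support, MvPolynomial.coeff d f *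
          ∏ i, ∑ y ∈ S i, (y ^ (d i) * Lagrange.nodalWeight (S i) id y) := by
        refine Finset.sum_congr rfl fun d _ => ?_
        rw [Finset.prod_univ_sum]
    _ = ∑ d ∈ f.support, MvPolynomial.coeff d f * (if d = m then 1 else 0) := by
        refine Finset.sum_congr rfl fun d hd => ?_
        congr 1
        have hdsum : ∑ i, d i ≤ ∑ i, t i := by
          refine le_trans ?_ (le_trans (MvPolynomial.le_totalDegree hd) hf)
          rw [Finsupp.sum_fintype]
          intro i; rfl
        by_cases hcase : ∀ i, d i ≤ t i
        · have : ∀ i ∈ Finset.univ, (∑ y ∈ S i, y ^ (d i) * Lagrange.nodalWeight (S i) id y)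
              = if d i = t i then 1 else 0 := by
            intro i _
            rw [nodal_weight_pow_sum (S i) (d i) (by rw [hS i]; exact Nat.lt_succ_of_le (hcase i))]
            simp [hS i]
          rw [Finset.prod_congr rfl this, Finset.prod_boole]
          have hiff : d = m ↔ ∀ i ∈ Finset.univ, d i = t i := by
            constructor
            · intro h i _; rw [h]; rfl
            · intro h; ext i; exact h i (Finset.mem_univ i)
          by_cases h : d = m
          · rw [if_pos (hiff.mp h), if_pos h]
          · rw [if_neg (fun hh => h (hiff.mpr hh)), if_neg h]
        · push_neg at hcase
          obtain ⟨i, hi⟩ := hcase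
          have hdm : d ≠ m := by
            intro h; rw [h] at hi; exact absurd (hmi i).le (by omega)
          have hj : ∃ j, d j < t j := by
            by_contra hno
            push_neg at hno
            have : ∑ i, t i < ∑ i, d i :=
              Finset.sum_lt_sum (fun j _ => hno j) ⟨i, Finset.mem_univ i, by omega⟩
            omega
          obtain ⟨j, hj⟩ := hj
          rw [if_neg hdm]
          refine Finset.prod_eq_zero (Finset.mem_univ j) ?_
          rw [nodal_weight_pow_sum (S j) (d j) (by rw [hS j]; omega)]
          rw [if_neg (show ¬ d j = (S j).card - 1 by rw [hS j]; omega)]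
    _ = MvPolynomial.coeff m f := by
        simp only [mul_ite, mul_one, mul_zero, Finset.sum_ite_eq' f.support m
          (fun d => MvPolynomial.coeff d f)]
        by_cases h : m ∈ f.support
        · rw [if_pos h]
        · rw [if_neg h, eq_comm]
          exact MvPolynomial.notMem_support_iff.mp h

open MvPolynomial in
lemma prod_sub_prod_totalDegree_lt {R : Type*} [CommRing R] {σ : Type*} {ι : Type*}
    (s : Finset ι) (f g : ι → MvPolynomial σ R)
    (hf : ∀ q ∈ s, (f q).totalDegree ≤ 1)
    (hfg : ∀ q ∈ s, (g q - f q).totalDegree = 0) :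
    s = ∅ ∨ (∏ q ∈ s, g q - ∏ q ∈ s, f q).totalDegree < s.card := by
  classical
  induction s using Finset.induction_on with
  | empty => exact Or.inl rfl
  | @insert q s hq IH =>
    right
    have hg1 : ∀ r ∈ insert q s, (g r).totalDegree ≤ 1 := by
      intro r hr
      have h : g r = f r + (g r - f r) := by ring
      rw [h]
      refine le_trans (totalDegree_add _ _) (max_le (hf r hr) ?_)
      rw [hfg r hr]; omega
    have key : ∏ r ∈ insert q s, g r - ∏ r ∈ insert q s, f r
        = (g q - f q) * ∏ r ∈ s, g r + f q * (∏ r ∈ s, g r - ∏ r ∈ s, f r) := by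
      rw [Finset.prod_insert hq, Finset.prod_insert hq]; ring
    rw [key, Finset.card_insert_of_notMem hq]
    have h1 : ((g q - f q) * ∏ r ∈ s, g r).totalDegree ≤ s.card := by
      refine le_trans (totalDegree_mul _ _) ?_
      rw [hfg q (Finset.mem_insert_self q s), zero_add]
      refine le_trans (totalDegree_finset_prod s g) ?_
      calc ∑ r ∈ s, (g r).totalDegree ≤ ∑ r ∈ s, 1 :=
            Finset.sum_le_sum fun r hr => hg1 r (Finset.mem_insert_of_mem hr)
        _ = s.card := by rw [Finset.sum_const, smul_eq_mul, mul_one]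
    have h2 : (f q * (∏ r ∈ s, g r - ∏ r ∈ s, f r)).totalDegree ≤ s.card := by
      rcases IH (fun r hr => hf r (Finset.mem_insert_of_mem hr))
          (fun r hr => hfg r (Finset.mem_insert_of_mem hr)) with hemp | hlt
      · subst hemp
        simp
      · refine le_trans (totalDegree_mul _ _) ?_
        have := hf q (Finset.mem_insert_self q s)
        omega
    calc ((g q - f q) * ∏ r ∈ s, g r + f q * (∏ r ∈ s, g r - ∏ r ∈ s, f r)).totalDegree
        ≤ max ((g q - f q) * ∏ r ∈ s, g r).totalDegree
            (f q * (∏ r ∈ s, g r - ∏ r ∈ s, f r)).totalDegree := totalDegree_add _ _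
      _ ≤ s.card := max_le h1 h2
      _ < s.card + 1 := Nat.lt_succ_self _

open MvPolynomial in
lemma vandermonde_det_X_eq_sum {R : Type*} [CommRing R] (k : ℕ) :
    (Matrix.vandermonde fun i : Fin k => (X i : MvPolynomial (Fin k) R)).det
      = ∑ σ : Equiv.Perm (Fin k),
          monomial (Finsupp.equivFunOnFinite.symm fun j => ((σ⁻¹ j : Fin k) : ℕ))
            (((Equiv.Perm.sign σ : ℤ) : R)) := by
  rw [Matrix.det_apply]
  refine Finset.sum_congr rfl fun σ _ => ?_
  have h1 : (∏ i, Matrix.vandermonde (fun i : Fin k => (X i : MvPolynomial (Fin k) R)) (σ i) i)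
      = monomial (Finsupp.equivFunOnFinite.symm fun j => ((σ⁻¹ j : Fin k) : ℕ)) (1:R) := by
    rw [monomial_eq, Finsupp.prod_fintype _ _ (fun i => pow_zero _), map_one, one_mul]
    have h2 : ∀ i : Fin k,
        Matrix.vandermonde (fun i : Fin k => (X i : MvPolynomial (Fin k) R)) (σ i) i
          = (fun j => (X j : MvPolynomial (Fin k) R) ^ ((σ⁻¹ j : Fin k) : ℕ)) (σ i) := by
      intro i
      simp [Matrix.vandermonde_apply, Equiv.Perm.inv_def, Equiv.symm_apply_apply]
    rw [Finset.prod_congr rfl (fun i _ => h2 i),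
      Equiv.prod_comp σ (fun j => (X j : MvPolynomial (Fin k) R) ^ ((σ⁻¹ j : Fin k) : ℕ))]
    rfl
  rw [h1, Units.smul_def, zsmul_eq_mul, ← map_intCast (C : R →+* MvPolynomial (Fin k) R),
    MvPolynomial.C_mul_monomial, mul_one]

open MvPolynomial in
lemma coeff_vandermonde_det_sq {R : Type*} [CommRing R] (k : ℕ) :
    MvPolynomial.coeff (Finsupp.equivFunOnFinite.symm fun _ : Fin k => k - 1)
      ((Matrix.vandermonde fun i : Fin k => (X i : MvPolynomial (Fin k) R)).det
        * (Matrix.vandermonde fun i : Fin k => (X i : MvPolynomial (Fin k) R)).det)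
      = (k.factorial : R)
          * ((Equiv.Perm.sign (Fin.revPerm : Equiv.Perm (Fin k)) : ℤ) : R) := by
  classical
  set ε : Equiv.Perm (Fin k) → R := fun σ => ((Equiv.Perm.sign σ : ℤ) : R) with hε
  set dd : Equiv.Perm (Fin k) → (Fin k →₀ ℕ) :=
    fun σ => Finsupp.equivFunOnFinite.symm fun j => ((σ⁻¹ j : Fin k) : ℕ) with hdd
  set mF : Fin k →₀ ℕ := Finsupp.equivFunOnFinite.symm fun _ : Fin k => k - 1 with hmF
  rw [vandermonde_det_X_eq_sum, Finset.sum_mul_sum]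
  simp only [MvPolynomial.monomial_mul]
  rw [MvPolynomial.coeff_sum]
  simp only [MvPolynomial.coeff_sum, MvPolynomial.coeff_monomial]
  have hrevinv : ∀ σ : Equiv.Perm (Fin k), ∀ j,
      (σ * (Fin.revPerm : Equiv.Perm (Fin k)))⁻¹ j = Fin.rev (σ⁻¹ j) := by
    intro σ j
    simp [Equiv.Perm.inv_def, Fin.revPerm_symm]
  have hcond : ∀ σ τ : Equiv.Perm (Fin k),
      dd σ + dd τ = mF ↔ τ = σ * (Fin.revPerm : Equiv.Perm (Fin k)) := by
    intro σ τ
    constructor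
    · intro h
      have h' : ∀ j, ((σ⁻¹ j : Fin k) : ℕ) + ((τ⁻¹ j : Fin k) : ℕ) = k - 1 := by
        intro j
        have := congrArg (fun d : Fin k →₀ ℕ => d j) h
        simpa [hdd, hmF] using this
      have : τ⁻¹ = (σ * (Fin.revPerm : Equiv.Perm (Fin k)))⁻¹ := by
        apply Equiv.ext
        intro j
        rw [hrevinv σ j]
        have h1 := (σ⁻¹ j).isLt
        have h2 := (τ⁻¹ j).isLt
        have h3 := h' j
        ext
        rw [Fin.val_rev]
        omega
      exact inv_injective this
    · intro h
      subst h
      ext j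
      have h1 := (σ⁻¹ j).isLt
      simp only [hdd, hmF, Finsupp.add_apply]
      show ((σ⁻¹ j : Fin k) : ℕ) + (((σ * (Fin.revPerm : Equiv.Perm (Fin k)))⁻¹ j : Fin k) : ℕ)
        = k - 1
      rw [hrevinv σ j, Fin.val_rev]
      omega
  have hstep : ∀ σ : Equiv.Perm (Fin k),
      (∑ τ : Equiv.Perm (Fin k), if dd σ + dd τ = mF then ε σ * ε τ else 0)
        = ε (Fin.revPerm : Equiv.Perm (Fin k)) := by
    intro σ
    have : ∀ τ : Equiv.Perm (Fin k),
        (if dd σ + dd τ = mF then ε σ * ε τ else 0)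
          = if τ = σ * (Fin.revPerm : Equiv.Perm (Fin k)) then ε σ * ε τ else 0 := by
      intro τ
      exact if_congr (hcond σ τ) rfl rfl
    rw [Finset.sum_congr rfl fun τ _ => this τ,
      Finset.sum_ite_eq' Finset.univ (σ * (Fin.revPerm : Equiv.Perm (Fin k)))
        (fun τ => ε σ * ε τ), if_pos (Finset.mem_univ _)]
    simp only [hε, map_mul]
    push_cast
    rcases Int.units_eq_one_or (Equiv.Perm.sign σ) with h | h <;> rw [h] <;> push_cast <;> ring
  rw [Finset.sum_congr rfl fun σ _ => hstep σ, Finset.sum_const, Finset.card_univ,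
    Fintype.card_perm, Fintype.card_fin, nsmul_eq_mul]

/-- (Alon) Let `p` be a prime and `k < p`. For every sequence `a_1, …, a_k` of elements of
`ℤ_p` (repetitions allowed) and every set `{b_1, …, b_k}` of `k` distinct elements of `ℤ_p`,
there is a permutation `σ` of `{1, …, k}` such that the sums `a_i + b_{σ(i)}` are pairwise
distinct. -/
theorem exists_perm_sums_distinct
    (p k : ℕ) (hp : p.Prime) (hk : k < p)
    (a : Fin k → ZMod p) (b : Fin k → ZMod p) (hb : Function.Injective b) :
    ∃ σ : Equiv.Perm (Fin k), Function.Injective fun i => a i + b (σ i) := by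
  haveI : Fact p.Prime := ⟨hp⟩
  classical
  rcases Nat.lt_or_ge k 2 with hk2 | hk2
  · haveI : Subsingleton (Fin k) := Fin.subsingleton_iff_le_one.mpr (by omega)
    exact ⟨1, fun i j _ => Subsingleton.elim i j⟩
  set V : MvPolynomial (Fin k) (ZMod p) :=
    (Matrix.vandermonde fun i : Fin k => (MvPolynomial.X i : MvPolynomial (Fin k) (ZMod p))).det with hVdef
  set W : MvPolynomial (Fin k) (ZMod p) :=
    (Matrix.vandermonde fun i : Fin k =>
      (MvPolynomial.X i + MvPolynomial.C (a i) : MvPolynomial (Fin k) (ZMod p))).det with hWdef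
  set t : Fin k → ℕ := fun _ => k - 1 with ht
  set S : Fin k → Finset (ZMod p) := fun _ => Finset.univ.image b with hS
  have hScard : ∀ i, (S i).card = t i + 1 := by
    intro i
    rw [hS]
    simp only [Finset.card_image_of_injective _ hb, Finset.card_univ, Fintype.card_fin, ht]
    omega
  set prs : Finset (Σ _ : Fin k, Fin k) := Finset.univ.sigma fun i => Finset.Ioi i with hprs
  have hVprod : V = ∏ q ∈ prs, (MvPolynomial.X q.2 - MvPolynomial.X q.1 : MvPolynomial (Fin k) (ZMod p)) := by
    rw [hVdef, Matrix.det_vandermonde, hprs, Finset.prod_sigma]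
  have hWprod : W = ∏ q ∈ prs,
      (MvPolynomial.X q.2 - MvPolynomial.X q.1 + MvPolynomial.C (a q.2 - a q.1) : MvPolynomial (Fin k) (ZMod p)) := by
    rw [hWdef, Matrix.det_vandermonde, hprs, Finset.prod_sigma]
    refine Finset.prod_congr rfl fun i _ => Finset.prod_congr rfl fun j _ => ?_
    rw [map_sub]
    ring
  have hprs_card : 2 * prs.card = k * (k - 1) := by
    have h1 : prs.card = ∑ j ∈ Finset.range k, (k - 1 - j) := by
      rw [hprs, Finset.card_sigma, ← Fin.sum_univ_eq_sum_range (fun j => k - 1 - j) k]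
      exact Finset.sum_congr rfl fun i _ => Fin.card_Ioi i
    rw [h1, Finset.sum_range_reflect (fun j => j) k, mul_comm]
    exact Finset.sum_range_id_mul_two k
  have hVdeg : V.totalDegree ≤ prs.card := by
    rw [hVprod]
    refine le_trans (MvPolynomial.totalDegree_finset_prod _ _) ?_
    calc ∑ q ∈ prs, (MvPolynomial.X q.2 - MvPolynomial.X q.1 : MvPolynomial (Fin k) (ZMod p)).totalDegree
        ≤ ∑ _q ∈ prs, 1 := Finset.sum_le_sum fun q _ =>
          le_trans (MvPolynomial.totalDegree_sub _ _) (by simp [MvPolynomial.totalDegree_X])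
      _ = prs.card := by rw [Finset.sum_const, smul_eq_mul, mul_one]
  have hWdeg : W.totalDegree ≤ prs.card := by
    rw [hWprod]
    refine le_trans (MvPolynomial.totalDegree_finset_prod _ _) ?_
    calc ∑ q ∈ prs, (MvPolynomial.X q.2 - MvPolynomial.X q.1 + MvPolynomial.C (a q.2 - a q.1)
            : MvPolynomial (Fin k) (ZMod p)).totalDegree
        ≤ ∑ _q ∈ prs, 1 := by
          refine Finset.sum_le_sum fun q _ => ?_
          refine le_trans (MvPolynomial.totalDegree_add _ _) (max_le ?_ ?_)
          · exact le_trans (MvPolynomial.totalDegree_sub _ _) (by simp [MvPolynomial.totalDegree_X])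
          · rw [MvPolynomial.totalDegree_C]; omega
      _ = prs.card := by rw [Finset.sum_const, smul_eq_mul, mul_one]
  set mF : Fin k →₀ ℕ := Finsupp.equivFunOnFinite.symm t with hmF
  have hmFsum : ∑ i ∈ mF.support, mF i = k * (k - 1) := by
    have h1 : ∑ i ∈ mF.support, mF i = ∑ i : Fin k, mF i :=
      Finset.sum_subset (Finset.subset_univ _)
        (fun i _ h => Finsupp.notMem_support_iff.mp h)
    have h2 : ∀ i : Fin k, mF i = k - 1 := fun i => rfl
    rw [h1, Finset.sum_congr rfl fun i _ => h2 i, Finset.sum_const, Finset.card_univ,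
      Fintype.card_fin, smul_eq_mul]
  have hprsne : prs ≠ ∅ := by
    have hmem : (⟨⟨0, by omega⟩, ⟨1, by omega⟩⟩ : Σ _ : Fin k, Fin k) ∈ prs := by
      rw [hprs, Finset.mem_sigma]
      exact ⟨Finset.mem_univ _, Finset.mem_Ioi.mpr (Fin.mk_lt_mk.mpr (by omega))⟩
    exact Finset.ne_empty_of_mem hmem
  have hdiff : (W - V).totalDegree < prs.card := by
    rcases prod_sub_prod_totalDegree_lt prs
        (fun q => (MvPolynomial.X q.2 - MvPolynomial.X q.1 : MvPolynomial (Fin k) (ZMod p)))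
        (fun q => (MvPolynomial.X q.2 - MvPolynomial.X q.1 + MvPolynomial.C (a q.2 - a q.1) : MvPolynomial (Fin k) (ZMod p)))
        (fun q _ => le_trans (MvPolynomial.totalDegree_sub _ _) (by simp [MvPolynomial.totalDegree_X]))
        (fun q _ => by
          have : (MvPolynomial.X q.2 - MvPolynomial.X q.1 + MvPolynomial.C (a q.2 - a q.1) : MvPolynomial (Fin k) (ZMod p))
              - (MvPolynomial.X q.2 - MvPolynomial.X q.1) = MvPolynomial.C (a q.2 - a q.1) := by ring
          rw [this, MvPolynomial.totalDegree_C]) with hemp | hlt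
    · exact absurd hemp hprsne
    · rw [hWprod, hVprod]
      exact hlt
  have hcoeq : MvPolynomial.coeff mF (V * W) = MvPolynomial.coeff mF (V * V) := by
    have h0 : MvPolynomial.coeff mF (V * W - V * V) = 0 := by
      have hfac : V * W - V * V = V * (W - V) := by ring
      rw [hfac]
      apply MvPolynomial.coeff_eq_zero_of_totalDegree_lt
      rw [hmFsum]
      calc (V * (W - V)).totalDegree ≤ V.totalDegree + (W - V).totalDegree :=
            MvPolynomial.totalDegree_mul _ _
        _ < k * (k - 1) := by omega
    rw [MvPolynomial.coeff_sub] at h0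
    exact sub_eq_zero.mp h0
  have hcoeff_ne : MvPolynomial.coeff mF (V * W) ≠ 0 := by
    rw [hcoeq, hVdef, hmF, ht, coeff_vandermonde_det_sq]
    have h1 : ((k.factorial : ZMod p)) ≠ 0 := by
      rw [Ne, ZMod.natCast_eq_zero_iff]
      intro hdvd
      exact absurd (hp.dvd_factorial.mp hdvd) (by omega)
    rcases Int.units_eq_one_or
        (Equiv.Perm.sign (Fin.revPerm : Equiv.Perm (Fin k))) with h | h <;>
      rw [h] <;> simpa using h1
  have hfdeg : (V * W).totalDegree ≤ ∑ i, t i := by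
    have hts : ∑ i : Fin k, t i = k * (k - 1) := by
      rw [ht, Finset.sum_const, Finset.card_univ, Fintype.card_fin, smul_eq_mul]
    rw [hts]
    calc (V * W).totalDegree ≤ V.totalDegree + W.totalDegree := MvPolynomial.totalDegree_mul _ _
      _ ≤ k * (k - 1) := by omega
  rw [coeff_eq_sum_grid (V * W) t S hScard hfdeg] at hcoeff_ne
  obtain ⟨x, hxmem, hxne⟩ := Finset.exists_ne_zero_of_sum_ne_zero hcoeff_ne
  have hx1 : MvPolynomial.eval x (V * W) ≠ 0 := fun h => hxne (by rw [h, zero_mul])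
  rw [map_mul] at hx1
  have hxV : MvPolynomial.eval x V ≠ 0 := left_ne_zero_of_mul hx1
  have hxW : MvPolynomial.eval x W ≠ 0 := right_ne_zero_of_mul hx1
  have hxinj : Function.Injective x := by
    rw [hVdef, RingHom.map_det] at hxV
    have hmat : (MvPolynomial.eval x).mapMatrix
        (Matrix.vandermonde fun i : Fin k => (MvPolynomial.X i : MvPolynomial (Fin k) (ZMod p)))
          = Matrix.vandermonde x := by
      ext i j
      simp [Matrix.vandermonde_apply, RingHom.mapMatrix_apply, Matrix.map_apply]
    rw [hmat] at hxV
    exact Matrix.det_vandermonde_ne_zero_iff.mp hxV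
  have hsuminj : Function.Injective fun i => x i + a i := by
    rw [hWdef, RingHom.map_det] at hxW
    have hmat : (MvPolynomial.eval x).mapMatrix
        (Matrix.vandermonde fun i : Fin k =>
          (MvPolynomial.X i + MvPolynomial.C (a i) : MvPolynomial (Fin k) (ZMod p)))
          = Matrix.vandermonde fun i => x i + a i := by
      ext i j
      simp [Matrix.vandermonde_apply, RingHom.mapMatrix_apply, Matrix.map_apply]
    rw [hmat] at hxW
    exact Matrix.det_vandermonde_ne_zero_iff.mp hxW
  have hxb : ∀ i, ∃ j, b j = x i := by
    intro i
    have hmem := Fintype.mem_piFinset.mp hxmem i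
    rw [hS] at hmem
    obtain ⟨j, _, hj⟩ := Finset.mem_image.mp hmem
    exact ⟨j, hj⟩
  choose g hg using hxb
  have hginj : Function.Injective g := fun i j hij => hxinj (by rw [← hg i, ← hg j, hij])
  refine ⟨Equiv.ofBijective g (Finite.injective_iff_bijective.mp hginj), ?_⟩
  have heq : (fun i => a i + b (Equiv.ofBijective g
      (Finite.injective_iff_bijective.mp hginj) i)) = fun i => x i + a i := by
    funext i
    rw [Equiv.ofBijective_apply, hg i]
    ring
  rw [heq]
  exact hsuminj
end

section
/- Let p be a prime. Let F be a forest consisting of k vertex-disjoint stars with centers x_1, …, x_k and with h ≤ (p−1)/2 edges in total. Let S ⊆ Z_p \ {0} be an antisymmetric set with |S| = h. Then every injection f : {x_1, …, x_k} → Z_p extends to a rainbow edge-injective homomorphism f_1 : F → Cay(Z_p, S) (for the orientation of F from the centers towards the leaves) such that the image f_1(F) is an oriented graph in which every vertex has indegree at most one. -/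
open MvPolynomial

namespace RainbowAux

variable {F : Type*} [Field F] {n : ℕ}

lemma key_dvd (P : MvPolynomial (Fin n) F) (i : Fin n) (a : F) :
    (X i - C a) ∣ P - bind₁ (Function.update X i (C a)) P := by
  induction P using MvPolynomial.induction_on with
  | C c => simp
  | add p q hp hq =>
      rw [map_add]
      have : p + q - (bind₁ (Function.update X i (C a)) p
          + bind₁ (Function.update X i (C a)) q)
          = (p - bind₁ (Function.update X i (C a)) p)
          + (q - bind₁ (Function.update X i (C a)) q) := by ring
      rw [this]
      exact dvd_add hp hq
  | mul_X p j hp =>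
      rw [map_mul, bind₁_X_right]
      by_cases hji : j = i
      · subst hji
        rw [Function.update_self]
        have : p * X j - bind₁ (Function.update X j (C a)) p * C a
            = (p - bind₁ (Function.update X j (C a)) p) * X j
            + bind₁ (Function.update X j (C a)) p * (X j - C a) := by ring
        rw [this]
        exact dvd_add (Dvd.dvd.mul_right hp _) (dvd_mul_left _ _)
      · rw [Function.update_of_ne hji]
        have : p * X j - bind₁ (Function.update X i (C a)) p * X j
            = (p - bind₁ (Function.update X i (C a)) p) * X j := by ring
        rw [this]
        exact Dvd.dvd.mul_right hp _

lemma not_mem_vars_bind (P : MvPolynomial (Fin n) F) (i : Fin n) (a : F) :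
    i ∉ (bind₁ (Function.update X i (C a)) P).vars := by
  intro hi
  obtain ⟨q, _, hq2⟩ := mem_vars_bind₁ _ _ hi
  rw [Function.update_apply] at hq2
  by_cases hqi : q = i
  · rw [if_pos hqi, vars_C] at hq2; exact absurd hq2 (Finset.notMem_empty i)
  · rw [if_neg hqi, vars_X, Finset.mem_singleton] at hq2
    exact hqi hq2.symm

lemma coeff_eq_zero_of_not_mem_vars {P : MvPolynomial (Fin n) F} {i : Fin n}
    (hi : i ∉ P.vars) {t : Fin n →₀ ℕ} (ht : t i ≠ 0) : P.coeff t = 0 := by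
  by_contra hc
  exact hi ((mem_vars i).mpr ⟨t, mem_support_iff.mpr hc, Finsupp.mem_support_iff.mpr ht⟩)

lemma totalDegree_bind_update_le (P : MvPolynomial (Fin n) F) (i : Fin n) (a : F) :
    (bind₁ (Function.update X i (C a)) P).totalDegree ≤ P.totalDegree := by
  conv_lhs => rw [P.as_sum, map_sum]
  refine (totalDegree_finset_sum _ _).trans (Finset.sup_le fun d hd => ?_)
  rw [bind₁_monomial]
  refine (totalDegree_mul _ _).trans ?_
  rw [totalDegree_C, zero_add]
  refine (totalDegree_finset_prod _ _).trans ?_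
  have h1 : ∀ j ∈ d.support, (Function.update X i (C a) j ^ d j).totalDegree ≤ d j := by
    intro j _
    refine (totalDegree_pow _ _).trans ?_
    have : (Function.update X i (C a) j).totalDegree ≤ 1 := by
      rw [Function.update_apply]
      split
      · simp
      · simp [totalDegree_X]
    calc d j * (Function.update X i (C a) j).totalDegree ≤ d j * 1 :=
          Nat.mul_le_mul_left _ this
      _ = d j := Nat.mul_one _
  refine le_trans (Finset.sum_le_sum h1) ?_
  calc ∑ j ∈ d.support, d j = d.sum fun _ e => e := by simp [Finsupp.sum]
    _ ≤ P.totalDegree := le_totalDegree hd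

end RainbowAux

namespace RainbowAux

open MvPolynomial

variable {F : Type*} [Field F] {n : ℕ}

lemma eval_bind_update (P : MvPolynomial (Fin n) F) (i : Fin n) (a : F) (x : Fin n → F) :
    eval x (bind₁ (Function.update X i (C a)) P) = eval (Function.update x i a) P := by
  have h := eval₂Hom_bind₁ (RingHom.id F) x (Function.update X i (C a)) P
  have hfun : (fun j => eval₂Hom (RingHom.id F) x (Function.update X i (C a) j))
      = Function.update x i a := by
    funext j
    rw [Function.update_apply, Function.update_apply]
    split
    · simp
    · simp
  rw [hfun] at h
  exact h

lemma finsupp_sum_eq (m : Fin n →₀ ℕ) : (m.sum fun _ e => e) = ∑ j ∈ m.support, m j := rfl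

lemma fin_sum_add_single (d : Fin n →₀ ℕ) (i : Fin n) :
    (∑ j, ((d + Finsupp.single i 1 : Fin n →₀ ℕ)) j) = (∑ j, d j) + 1 := by
  simp only [Finsupp.add_apply]
  rw [Finset.sum_add_distrib]
  congr 1
  simp [Finsupp.single_apply]

lemma sum_add_single (d : Fin n →₀ ℕ) (i : Fin n) :
    ((d + Finsupp.single i 1).sum fun _ e => e) = (d.sum fun _ e => e) + 1 := by
  rw [Finsupp.sum_fintype _ _ (fun _ => rfl), Finsupp.sum_fintype _ _ (fun _ => rfl)]
  exact fin_sum_add_single d i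

lemma totalDegree_X_sub_C_mul (Q : MvPolynomial (Fin n) F) (hQ : Q ≠ 0) (i : Fin n) (a : F) :
    Q.totalDegree + 1 ≤ ((X i - C a) * Q).totalDegree := by
  classical
  obtain ⟨d, hd, hdeg⟩ : ∃ d ∈ Q.support, Q.totalDegree = d.sum fun _ e => e :=
    Finset.exists_mem_eq_sup _ (support_nonempty.mpr hQ) _
  set m : Fin n →₀ ℕ := d + Finsupp.single i 1 with hm
  have hmi : i ∈ m.support := by
    rw [Finsupp.mem_support_iff, hm, Finsupp.add_apply, Finsupp.single_apply, if_pos rfl]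
    omega
  have hmsum : (m.sum fun _ e => e) = Q.totalDegree + 1 := by
    rw [hm, sum_add_single, hdeg]
  have hcQm : Q.coeff m = 0 := by
    by_contra hc
    have := le_totalDegree (mem_support_iff.mpr hc)
    omega
  have hcoeff : ((X i - C a) * Q).coeff m = Q.coeff d := by
    have hexp : (X i - C a) * Q = Q * X i - C a * Q := by ring
    rw [hexp, coeff_sub, coeff_mul_X', if_pos hmi, coeff_C_mul, hcQm, mul_zero, sub_zero]
    congr 1
    rw [hm]
    exact add_tsub_cancel_right d (Finsupp.single i 1)
  have hne : Q.coeff d ≠ 0 := mem_support_iff.mp hd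
  have hmem : m ∈ ((X i - C a) * Q).support := mem_support_iff.mpr (by rw [hcoeff]; exact hne)
  have := le_totalDegree hmem
  omega

lemma coeff_eq_zero_of_totalDegree_lt {P : MvPolynomial (Fin n) F} {t : Fin n →₀ ℕ}
    (h : P.totalDegree < t.sum fun _ e => e) : P.coeff t = 0 := by
  by_contra hc
  have := le_totalDegree (mem_support_iff.mpr hc)
  omega

lemma zero_of_sum_eq_zero {m : Fin n →₀ ℕ} (h : (m.sum fun _ e => e) = 0) : m = 0 := by
  refine Finsupp.ext fun j => ?_
  rw [Finsupp.sum_fintype _ _ (fun _ => rfl)] at h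
  have : m j ≤ ∑ j, m j := Finset.single_le_sum (fun _ _ => Nat.zero_le _) (Finset.mem_univ j)
  simp only [Finsupp.coe_zero, Pi.zero_apply]
  omega

lemma cn_vanish : ∀ (N : ℕ) (t : Fin n →₀ ℕ), (t.sum fun _ e => e) = N →
    ∀ (Sets : Fin n → Finset F), (∀ i, t i < (Sets i).card) →
    ∀ (P : MvPolynomial (Fin n) F), P.totalDegree ≤ N →
    (∀ x : Fin n → F, (∀ i, x i ∈ Sets i) → eval x P = 0) →
    P.coeff t = 0 := by
  intro N
  induction N with
  | zero =>
    intro t ht Sets hS P hdeg hvan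
    classical
    have ht0 : t = 0 := zero_of_sum_eq_zero ht
    have hne : ∀ i, ∃ y, y ∈ Sets i := fun i =>
      Finset.card_pos.mp (lt_of_le_of_lt (Nat.zero_le _) (hS i))
    set x : Fin n → F := fun i => (hne i).choose with hx
    have hxg : ∀ i, x i ∈ Sets i := fun i => (hne i).choose_spec
    have hP : P = C (P.coeff 0) := by
      ext m
      rw [coeff_C]
      split
      · next h => rw [← h]
      · next h =>
        by_contra hc
        have hle := le_totalDegree (mem_support_iff.mpr hc)
        have hms : (m.sum fun _ e => e) = 0 := by omega
        exact h (zero_of_sum_eq_zero hms).symm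
    have h1 := hvan x hxg
    rw [hP, eval_C] at h1
    rw [ht0]
    exact h1
  | succ M ih =>
    intro t ht Sets hS P hdeg hvan
    classical
    have hex : ∃ i, t i ≠ 0 := by
      by_contra hcon
      push_neg at hcon
      have h0 : (t.sum fun _ e => e) = 0 := by
        rw [Finsupp.sum_fintype _ _ (fun _ => rfl)]
        exact Finset.sum_eq_zero fun j _ => hcon j
      omega
    obtain ⟨i, hti⟩ := hex
    obtain ⟨a, ha⟩ : ∃ a, a ∈ Sets i :=
      Finset.card_pos.mp (lt_of_le_of_lt (Nat.zero_le _) (hS i))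
    obtain ⟨Q, hQ⟩ := key_dvd P i a
    set R := bind₁ (Function.update X i (C a)) P with hR
    have hcoeffR : R.coeff t = 0 :=
      coeff_eq_zero_of_not_mem_vars (not_mem_vars_bind P i a) hti
    set Sets' := Function.update Sets i ((Sets i).erase a) with hSets'
    have hvanQ : ∀ x : Fin n → F, (∀ j, x j ∈ Sets' j) → eval x Q = 0 := by
      intro x hx
      have hxg : ∀ j, x j ∈ Sets j := by
        intro j
        have hj := hx j
        rw [hSets', Function.update_apply] at hj
        split at hj
        · next hji => subst hji; exact Finset.mem_of_mem_erase hj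
        · exact hj
      have hxi : x i ≠ a := by
        have hi := hx i
        rw [hSets', Function.update_self] at hi
        exact Finset.ne_of_mem_erase hi
      have hPx : eval x P = 0 := hvan x hxg
      have hRx : eval x R = 0 := by
        rw [hR, eval_bind_update]
        refine hvan _ fun j => ?_
        rw [Function.update_apply]
        split
        · next hji => rw [hji]; exact ha
        · exact hxg j
      have h0 : eval x (P - R) = 0 := by rw [map_sub, hPx, hRx, sub_zero]
      rw [hQ, map_mul] at h0
      have hXi : eval x (X i - C a) ≠ 0 := by
        rw [map_sub, eval_X, eval_C]
        exact sub_ne_zero_of_ne hxi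
      exact (mul_eq_zero.mp h0).resolve_left hXi
    by_cases hQ0 : Q = 0
    · have hPR : P = R := sub_eq_zero.mp (by rw [hQ, hQ0, mul_zero])
      rw [hPR, hcoeffR]
    · have hdegR : R.totalDegree ≤ M + 1 := (totalDegree_bind_update_le P i a).trans hdeg
      have hdegPR : (P - R).totalDegree ≤ M + 1 :=
        (totalDegree_sub P R).trans (sup_le hdeg hdegR)
      have hdegQM : Q.totalDegree ≤ M := by
        have h1 := totalDegree_X_sub_C_mul Q hQ0 i a
        rw [← hQ] at h1
        omega
      set t' : Fin n →₀ ℕ := t - Finsupp.single i 1 with ht'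
      have ht'app : ∀ j, t' j = if j = i then t i - 1 else t j := by
        intro j
        rw [ht', Finsupp.tsub_apply, Finsupp.single_apply]
        split
        · next hji => rw [hji, if_pos rfl]
        · next hji => rw [if_neg (fun h => hji h.symm)]; simp
      have htt' : t = t' + Finsupp.single i 1 := by
        refine Finsupp.ext fun j => ?_
        rw [Finsupp.add_apply, ht'app j, Finsupp.single_apply]
        split
        · next hji => rw [hji, if_pos rfl]; omega
        · next hji => rw [if_neg (fun h => hji h.symm)]; omega
      have ht'sum : (t'.sum fun _ e => e) = M := by
        have h2 : (t.sum fun _ e => e) = (t'.sum fun _ e => e) + 1 := by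
          conv_lhs => rw [htt']
          exact sum_add_single t' i
        omega
      have hS' : ∀ j, t' j < (Sets' j).card := by
        intro j
        rw [ht'app, hSets', Function.update_apply]
        split
        · next hji =>
          rw [Finset.card_erase_of_mem ha]
          have := hS i
          omega
        · exact hS j
      have hQcoeff : Q.coeff t' = 0 := ih t' ht'sum Sets' hS' Q hdegQM hvanQ
      have hPt : P.coeff t = ((X i - C a) * Q).coeff t + R.coeff t := by
        have hPeq : P = (X i - C a) * Q + R := by
          rw [← hQ]; ring
        rw [hPeq, coeff_add]
      have hQt : Q.coeff t = 0 := coeff_eq_zero_of_totalDegree_lt (by omega)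
      have hprod : ((X i - C a) * Q).coeff t = 0 := by
        have hexp : (X i - C a) * Q = Q * X i - C a * Q := by ring
        have hit : i ∈ t.support := Finsupp.mem_support_iff.mpr hti
        rw [hexp, coeff_sub, coeff_mul_X', if_pos hit, coeff_C_mul, hQt, mul_zero, sub_zero,
          ← ht']
        exact hQcoeff
      rw [hPt, hprod, hcoeffR]
      exact add_zero 0

end RainbowAux


namespace RainbowAux
variable {F : Type*} [Field F] {n : ℕ}

noncomputable def Vdm (n : ℕ) (F : Type*) [Field F] : MvPolynomial (Fin n) F :=
  ∏ i : Fin n, ∏ j ∈ Finset.Ioi i, (X j - X i)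

noncomputable def Wdm (a : Fin n → F) : MvPolynomial (Fin n) F :=
  ∏ i : Fin n, ∏ j ∈ Finset.Ioi i, (X j - X i + C (a j - a i))

noncomputable def tmon (n : ℕ) : Fin n →₀ ℕ :=
  Finsupp.equivFunOnFinite.symm (fun _ => n - 1)

lemma tmon_apply (i : Fin n) : tmon n i = n - 1 := rfl

lemma tmon_sum : ((tmon n).sum fun _ e => e) = n * (n - 1) := by
  rw [Finsupp.sum_fintype _ _ (fun _ => rfl)]
  simp [tmon_apply, Finset.sum_const, Finset.card_univ, mul_comm]

lemma K_sum : 2 * (∑ i : Fin n, (Finset.Ioi i).card) = n * (n - 1) := by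
  have h1 : ∑ i : Fin n, (Finset.Ioi i).card = ∑ i ∈ Finset.range n, (n - 1 - i) := by
    rw [← Fin.sum_univ_eq_sum_range (fun i => n - 1 - i) n]
    exact Finset.sum_congr rfl fun i _ => Fin.card_Ioi i
  rw [h1, Finset.sum_range_reflect (fun i => i) n]
  rw [mul_comm]
  exact Finset.sum_range_id_mul_two n

lemma totalDegree_Vdm_le : (Vdm n F).totalDegree ≤ ∑ i : Fin n, (Finset.Ioi i).card := by
  refine (totalDegree_finset_prod _ _).trans (Finset.sum_le_sum fun i _ => ?_)
  refine (totalDegree_finset_prod _ _).trans ?_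
  rw [Finset.card_eq_sum_ones]
  refine Finset.sum_le_sum fun j _ => ?_
  exact (totalDegree_sub _ _).trans (by simp [totalDegree_X])

lemma totalDegree_Wdm_le (a : Fin n → F) :
    (Wdm a).totalDegree ≤ ∑ i : Fin n, (Finset.Ioi i).card := by
  refine (totalDegree_finset_prod _ _).trans (Finset.sum_le_sum fun i _ => ?_)
  refine (totalDegree_finset_prod _ _).trans ?_
  rw [Finset.card_eq_sum_ones]
  refine Finset.sum_le_sum fun j _ => ?_
  refine (totalDegree_add _ _).trans (sup_le ?_ (by rw [totalDegree_C]; omega))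
  exact (totalDegree_sub _ _).trans (by simp [totalDegree_X])

/-- generic: product of (f e + C (c e)) equals product of f e plus lower-order error -/
lemma prod_add_C {ι : Type*} (s : Finset ι) (f : ι → MvPolynomial (Fin n) F) (c : ι → F)
    (hf : ∀ e ∈ s, (f e).totalDegree ≤ 1) :
    ∃ E : MvPolynomial (Fin n) F,
      (∏ e ∈ s, (f e + C (c e))) = (∏ e ∈ s, f e) + E ∧ E.totalDegree ≤ s.card ∧
      (E = 0 ∨ E.totalDegree < s.card) := by
  classical
  induction s using Finset.induction_on with
  | empty => exact ⟨0, by simp, by simp, Or.inl rfl⟩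
  | @insert e s hes ih =>
    obtain ⟨E, hE, hEle, hElt⟩ := ih (fun e' he' => hf e' (Finset.mem_insert_of_mem he'))
    have hfe : (f e).totalDegree ≤ 1 := hf e (Finset.mem_insert_self e s)
    have hPs : (∏ e' ∈ s, f e').totalDegree ≤ s.card := by
      refine (totalDegree_finset_prod _ _).trans ?_
      rw [Finset.card_eq_sum_ones]
      exact Finset.sum_le_sum fun e' he' => hf e' (Finset.mem_insert_of_mem he')
    refine ⟨f e * E + C (c e) * ((∏ e' ∈ s, f e') + E), ?_, ?_, ?_⟩
    · rw [Finset.prod_insert hes, Finset.prod_insert hes, hE]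
      ring
    · refine (totalDegree_add _ _).trans (sup_le ?_ ?_)
      · refine (totalDegree_mul _ _).trans ?_
        rw [Finset.card_insert_of_notMem hes]
        omega
      · refine (totalDegree_mul _ _).trans ?_
        rw [totalDegree_C, zero_add, Finset.card_insert_of_notMem hes]
        refine (totalDegree_add _ _).trans (sup_le (by omega) (by omega))
    · right
      rw [Finset.card_insert_of_notMem hes]
      have h1 : (f e * E).totalDegree ≤ s.card := by
        rcases hElt with h | h
        · rw [h, mul_zero, totalDegree_zero]; omega
        · exact (totalDegree_mul _ _).trans (by omega)
      have h2 : (C (c e) * ((∏ e' ∈ s, f e') + E)).totalDegree ≤ s.card := by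
        refine (totalDegree_mul _ _).trans ?_
        rw [totalDegree_C, zero_add]
        exact (totalDegree_add _ _).trans (sup_le hPs hEle)
      have := (totalDegree_add (f e * E) (C (c e) * ((∏ e' ∈ s, f e') + E))).trans
        (sup_le h1 h2)
      omega

end RainbowAux

namespace RainbowAux
open MvPolynomial
variable {F : Type*} [Field F] {n : ℕ}

lemma prod_X_pow_eq_monomial' {ι : Type*} (s : Finset ι) (v : ι → Fin n) (g : ι → ℕ) :
    (∏ i ∈ s, (X (v i) : MvPolynomial (Fin n) F) ^ g i)
      = monomial (∑ i ∈ s, Finsupp.single (v i) (g i)) 1 := by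
  classical
  induction s using Finset.induction_on with
  | empty => rw [Finset.prod_empty, Finset.sum_empty, monomial_zero', C_1]
  | @insert e s hes ih =>
    rw [Finset.prod_insert hes, Finset.sum_insert hes, ih, X_pow_eq_monomial, monomial_mul,
      one_mul]

noncomputable def mexp (σ : Equiv.Perm (Fin n)) : Fin n →₀ ℕ :=
  ∑ i : Fin n, Finsupp.single (σ i) (i : ℕ)

lemma mexp_apply (σ : Equiv.Perm (Fin n)) (v : Fin n) : mexp σ v = ((σ⁻¹ v : Fin n) : ℕ) := by
  rw [mexp, Finsupp.finset_sum_apply]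
  rw [Finset.sum_eq_single (σ⁻¹ v)]
  · rw [show σ (σ⁻¹ v) = v from σ.apply_symm_apply v, Finsupp.single_eq_same]
  · intro i _ hne
    rw [Finsupp.single_apply, if_neg]
    intro h
    exact hne (by rw [← h, show σ⁻¹ (σ i) = i from σ.symm_apply_apply i])
  · intro h
    exact absurd (Finset.mem_univ _) h

lemma revPerm_inv : (Fin.revPerm : Equiv.Perm (Fin n))⁻¹ = Fin.revPerm := rfl

lemma mexp_add_eq_iff (σ τ : Equiv.Perm (Fin n)) :
    mexp σ + mexp τ = tmon n ↔ τ = σ * Fin.revPerm := by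
  constructor
  · intro h
    have hv : ∀ v : Fin n, ((σ⁻¹ v : Fin n) : ℕ) + ((τ⁻¹ v : Fin n) : ℕ) = n - 1 := by
      intro v
      have := congrArg (fun f : Fin n →₀ ℕ => f v) h
      simpa [Finsupp.add_apply, mexp_apply, tmon_apply] using this
    have hinv : τ⁻¹ = Fin.revPerm * σ⁻¹ := by
      refine Equiv.ext fun v => ?_
      have h1 := hv v
      have hlt := (σ⁻¹ v).isLt
      rw [Equiv.Perm.mul_apply, Fin.revPerm_apply]
      refine Fin.ext ?_
      rw [Fin.val_rev]
      omega
    have h2 : τ = (Fin.revPerm * σ⁻¹)⁻¹ := by rw [← hinv, inv_inv]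
    rw [h2, mul_inv_rev, inv_inv, revPerm_inv]
  · intro h
    subst h
    refine Finsupp.ext fun v => ?_
    rw [Finsupp.add_apply, mexp_apply, mexp_apply, tmon_apply]
    have h1 : ((σ * Fin.revPerm)⁻¹ : Equiv.Perm (Fin n)) v = Fin.rev (σ⁻¹ v) := by
      rw [mul_inv_rev, revPerm_inv, Equiv.Perm.mul_apply, Fin.revPerm_apply]
    rw [h1, Fin.val_rev]
    have := (σ⁻¹ v).isLt
    omega

end RainbowAux

namespace RainbowAux
open MvPolynomial
variable {F : Type*} [Field F] {n : ℕ}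

lemma Vdm_eq_sum :
    Vdm n F = ∑ σ : Equiv.Perm (Fin n), Equiv.Perm.sign σ • monomial (mexp σ) (1:F) := by
  rw [Vdm, ← Matrix.det_vandermonde (X : Fin n → MvPolynomial (Fin n) F), Matrix.det_apply]
  refine Finset.sum_congr rfl fun σ _ => ?_
  congr 1
  rw [mexp, ← prod_X_pow_eq_monomial' Finset.univ (fun i => σ i) (fun i => (i:ℕ))]
  refine Finset.prod_congr rfl fun i _ => ?_
  rw [Matrix.vandermonde_apply]

lemma coeff_tmon_Vdm_sq (hfac : (n.factorial : F) ≠ 0) :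
    (Vdm n F * Vdm n F).coeff (tmon n) ≠ 0 := by
  classical
  have hterm : ∀ σ τ : Equiv.Perm (Fin n),
      ((Equiv.Perm.sign σ • monomial (mexp σ) (1:F))
        * (Equiv.Perm.sign τ • monomial (mexp τ) (1:F))).coeff (tmon n)
      = Equiv.Perm.sign σ • Equiv.Perm.sign τ •
          (if mexp σ + mexp τ = tmon n then (1:F) else 0) := by
    intro σ τ
    rw [smul_mul_assoc, mul_smul_comm, monomial_mul, one_mul, coeff_smul, coeff_smul,
      coeff_monomial]
  have hcoeff : (Vdm n F * Vdm n F).coeff (tmon n)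
      = ∑ σ : Equiv.Perm (Fin n), (Equiv.Perm.sign (Fin.revPerm : Equiv.Perm (Fin n))) • (1:F) := by
    rw [Vdm_eq_sum, Finset.sum_mul_sum, coeff_sum]
    refine Finset.sum_congr rfl fun σ _ => ?_
    rw [coeff_sum]
    simp only [hterm]
    rw [Finset.sum_eq_single (σ * Fin.revPerm)]
    · rw [if_pos ((mexp_add_eq_iff σ (σ * Fin.revPerm)).mpr rfl)]
      rw [Equiv.Perm.sign_mul, smul_smul, ← mul_assoc, Int.units_mul_self, one_mul]
    · intro τ _ hτ
      rw [if_neg (fun hc => hτ ((mexp_add_eq_iff σ τ).mp hc)), smul_zero, smul_zero]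
    · intro h
      exact absurd (Finset.mem_univ _) h
  rw [hcoeff, Finset.sum_const, Finset.card_univ, Fintype.card_perm, Fintype.card_fin]
  rcases Int.units_eq_one_or (Equiv.Perm.sign (Fin.revPerm : Equiv.Perm (Fin n))) with h | h
  · rw [h, one_smul, nsmul_eq_mul, mul_one]
    exact hfac
  · rw [h]
    have h1 : ((-1 : ℤˣ) • (1:F)) = -1 := by
      rw [Units.smul_def]
      simp
    rw [h1, nsmul_eq_mul]
    simpa using hfac

end RainbowAux

namespace RainbowAux
open MvPolynomial

theorem cn_exists {F : Type*} [Field F] {n : ℕ} (t : Fin n →₀ ℕ) (Sets : Fin n → Finset F)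
    (hS : ∀ i, t i < (Sets i).card)
    (P : MvPolynomial (Fin n) F) (hdeg : P.totalDegree ≤ t.sum fun _ e => e)
    (hc : P.coeff t ≠ 0) :
    ∃ x : Fin n → F, (∀ i, x i ∈ Sets i) ∧ eval x P ≠ 0 := by
  by_contra h
  push_neg at h
  exact hc (cn_vanish _ t rfl Sets hS P hdeg h)

theorem exists_injective_add (p : ℕ) [Fact p.Prime] {n : ℕ} (hn : n < p)
    (S : Finset (ZMod p)) (hScard : n ≤ S.card) (a : Fin n → ZMod p) :
    ∃ φ : Fin n → ZMod p, (∀ i, φ i ∈ S) ∧ Function.Injective φ ∧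
      Function.Injective (fun i => a i + φ i) := by
  classical
  set K : ℕ := ∑ i : Fin n, (Finset.Ioi i).card with hK
  -- decompose W
  set s : Finset ((_ : Fin n) × Fin n) := Finset.univ.sigma (fun i => Finset.Ioi i) with hs
  have hscard : s.card = K := by rw [hs, Finset.card_sigma]
  have hV : Vdm n (ZMod p) = ∏ e ∈ s, (X e.2 - X e.1) := by
    rw [Vdm, hs, Finset.prod_sigma]
  have hW : Wdm a = ∏ e ∈ s, ((X e.2 - X e.1) + C (a e.2 - a e.1)) := by
    rw [Wdm, hs, Finset.prod_sigma]
  obtain ⟨E, hWE, hEle, hElt⟩ := prod_add_C s (fun e => (X e.2 - X e.1)) (fun e => a e.2 - a e.1)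
    (fun e _ => (totalDegree_sub _ _).trans (by simp [totalDegree_X]))
  rw [← hV] at hWE
  set P : MvPolynomial (Fin n) (ZMod p) := Vdm n (ZMod p) * Wdm a with hP
  have htsum : ((tmon n).sum fun _ e => e) = 2 * K := by rw [tmon_sum, ← K_sum]
  have hdegP : P.totalDegree ≤ (tmon n).sum fun _ e => e := by
    rw [htsum, two_mul]
    exact (totalDegree_mul _ _).trans
      (add_le_add totalDegree_Vdm_le (totalDegree_Wdm_le a))
  have hcoeffVE : (Vdm n (ZMod p) * E).coeff (tmon n) = 0 := by
    rcases hElt with h | h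
    · rw [h, mul_zero, coeff_zero]
    · refine coeff_eq_zero_of_totalDegree_lt ?_
      have := totalDegree_mul (Vdm n (ZMod p)) E
      have hVle := totalDegree_Vdm_le (n := n) (F := ZMod p)
      rw [htsum]
      rw [hscard] at h
      omega
  have hfac : ((n.factorial : ℕ) : ZMod p) ≠ 0 := by
    rw [Ne, ZMod.natCast_eq_zero_iff]
    intro hdvd
    have := (Nat.Prime.dvd_factorial (Fact.out : p.Prime)).mp hdvd
    omega
  have hcoeffP : P.coeff (tmon n) ≠ 0 := by
    have hsplit : P = Vdm n (ZMod p) * Vdm n (ZMod p) + Vdm n (ZMod p) * E := by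
      rw [hP, hW, hWE]
      ring
    rw [hsplit, coeff_add, hcoeffVE, add_zero]
    exact coeff_tmon_Vdm_sq hfac
  have hSets : ∀ i : Fin n, tmon n i < S.card := by
    intro i
    have := i.pos
    rw [tmon_apply]
    omega
  obtain ⟨x, hxS, hxP⟩ := cn_exists (tmon n) (fun _ => S) hSets P hdegP hcoeffP
  have hPx : eval x (Vdm n (ZMod p)) * eval x (Wdm a) ≠ 0 := by
    rw [← map_mul]
    exact hxP
  obtain ⟨hVx, hWx⟩ := mul_ne_zero_iff.mp hPx
  have hVval : eval x (Vdm n (ZMod p)) = ∏ i : Fin n, ∏ j ∈ Finset.Ioi i, (x j - x i) := by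
    rw [Vdm, map_prod]
    refine Finset.prod_congr rfl fun i _ => ?_
    rw [map_prod]
    refine Finset.prod_congr rfl fun j _ => ?_
    rw [map_sub, eval_X, eval_X]
  have hWval : eval x (Wdm a)
      = ∏ i : Fin n, ∏ j ∈ Finset.Ioi i, (x j - x i + (a j - a i)) := by
    rw [Wdm, map_prod]
    refine Finset.prod_congr rfl fun i _ => ?_
    rw [map_prod]
    refine Finset.prod_congr rfl fun j _ => ?_
    rw [map_add, map_sub, eval_X, eval_X, eval_C]
  rw [hVval] at hVx
  rw [hWval] at hWx
  have hVfac : ∀ i : Fin n, ∀ j ∈ Finset.Ioi i, x j - x i ≠ 0 := by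
    intro i j hj
    exact (Finset.prod_ne_zero_iff.mp ((Finset.prod_ne_zero_iff.mp hVx) i (Finset.mem_univ i))) j hj
  have hWfac : ∀ i : Fin n, ∀ j ∈ Finset.Ioi i, x j - x i + (a j - a i) ≠ 0 := by
    intro i j hj
    exact (Finset.prod_ne_zero_iff.mp ((Finset.prod_ne_zero_iff.mp hWx) i (Finset.mem_univ i))) j hj
  refine ⟨x, hxS, ?_, ?_⟩
  · intro i j hij
    by_contra hne
    rcases Ne.lt_or_gt hne with h | h
    · exact hVfac i j (Finset.mem_Ioi.mpr h) (by rw [hij, sub_self])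
    · exact hVfac j i (Finset.mem_Ioi.mpr h) (by rw [hij, sub_self])
  · intro i j hij
    simp only at hij
    by_contra hne
    rcases Ne.lt_or_gt hne with h | h
    · refine hWfac i j (Finset.mem_Ioi.mpr h) ?_
      linear_combination hij.symm
    · refine hWfac j i (Finset.mem_Ioi.mpr h) ?_
      linear_combination hij

end RainbowAux

/-- Let `p` be a prime and let `F` be a forest of `k` vertex-disjoint stars with centers
`x 0, …, x (k-1)` and `h ≤ (p−1)/2` edges in total: the centers are pairwise distinct and
non-adjacent, and every non-center vertex has exactly one neighbour, which is a center.
Let `S ⊆ ℤ_p \ {0}` be an antisymmetric set with `|S| = h`.  Then every injection of the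
centers into `ℤ_p` extends to a rainbow edge-injective homomorphism `f₁` of `F` (oriented
from the centers towards the leaves) into `Cay(ℤ_p, S)` whose image has maximum indegree
one (i.e. `f₁` is injective on non-center vertices). -/
theorem forest_of_stars_rainbow_homomorphism
    (p : ℕ) (hp : p.Prime) {V : Type} [Fintype V]
    (F : SimpleGraph V) (k h : ℕ)
    (x : Fin k → V) (hx : Function.Injective x)
    (hcenters : ∀ i j : Fin k, ¬ F.Adj (x i) (x j))
    (hstar1 : ∀ v : V, v ∉ Set.range x → ∃! u : V, F.Adj v u)
    (hstar2 : ∀ v u : V, v ∉ Set.range x → F.Adj v u → u ∈ Set.range x)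
    (hedges : F.edgeSet.ncard = h) (hh : 2 * h ≤ p - 1)
    (S : Finset (ZMod p)) (hS0 : ∀ s ∈ S, s ≠ 0) (hSanti : ∀ s ∈ S, -s ∉ S)
    (hScard : S.card = h)
    (g : Fin k → ZMod p) (hg : Function.Injective g) :
    ∃ f₁ : V → ZMod p,
      (∀ i : Fin k, f₁ (x i) = g i) ∧
      (∀ (i : Fin k) (v : V), F.Adj (x i) v → f₁ v - f₁ (x i) ∈ S) ∧
      (∀ (i j : Fin k) (v w : V), F.Adj (x i) v → F.Adj (x j) w →
        f₁ v - f₁ (x i) = f₁ w - f₁ (x j) → i = j ∧ v = w) ∧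
      (∀ v w : V, v ∉ Set.range x → w ∉ Set.range x → f₁ v = f₁ w → v = w) := by
  classical
  haveI : Fact p.Prime := ⟨hp⟩
  -- every leaf has an adjacent center
  have hnb : ∀ v : V, v ∉ Set.range x → ∃ i : Fin k, F.Adj v (x i) := by
    intro v hv
    obtain ⟨u, hu, -⟩ := hstar1 v hv
    obtain ⟨i, hi⟩ := hstar2 v u hv hu
    exact ⟨i, hi ▸ hu⟩
  choose cIdx hcIdx using hnb
  have hcenter_unique : ∀ (v : V) (hv : v ∉ Set.range x) (i : Fin k),
      F.Adj (x i) v → cIdx v hv = i := by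
    intro v hv i hadj
    obtain ⟨u, -, hu2⟩ := hstar1 v hv
    exact hx ((hu2 _ (hcIdx v hv)).trans (hu2 _ hadj.symm).symm)
  -- bijection between leaves and edges
  set L := {v : V // v ∉ Set.range x} with hL
  set toEdge : L → F.edgeSet :=
    fun v => ⟨s(v.1, x (cIdx v.1 v.2)), F.mem_edgeSet.mpr (hcIdx v.1 v.2)⟩ with htoEdge
  have hinjE : Function.Injective toEdge := by
    rintro ⟨v, hv⟩ ⟨w, hw⟩ hvw
    have h' := Subtype.ext_iff.mp hvw
    simp only [htoEdge] at h'
    rw [Sym2.eq_iff] at h'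
    rcases h' with ⟨h1, -⟩ | ⟨h1, -⟩
    · exact Subtype.ext h1
    · exact absurd ⟨_, h1.symm⟩ hv
  have hsurjE : Function.Surjective toEdge := by
    rintro ⟨e, he⟩
    induction e using Sym2.ind with
    | _ u v =>
      rw [SimpleGraph.mem_edgeSet] at he
      by_cases hu : u ∈ Set.range x
      · have hvr : v ∉ Set.range x := by
          rintro ⟨j, rfl⟩
          obtain ⟨i, rfl⟩ := hu
          exact hcenters i j he
        refine ⟨⟨v, hvr⟩, Subtype.ext ?_⟩
        obtain ⟨w, -, hw2⟩ := hstar1 v hvr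
        have hxc : x (cIdx v hvr) = u := (hw2 _ (hcIdx v hvr)).trans (hw2 u he.symm).symm
        simp only [htoEdge]
        rw [hxc]
        exact Sym2.eq_swap
      · refine ⟨⟨u, hu⟩, Subtype.ext ?_⟩
        obtain ⟨w, -, hw2⟩ := hstar1 u hu
        have hxc : x (cIdx u hu) = v := (hw2 _ (hcIdx u hu)).trans (hw2 v he).symm
        simp only [htoEdge]
        rw [hxc]
  have hcardL : Fintype.card L = h := by
    have h1 : Nat.card L = Nat.card F.edgeSet :=
      Nat.card_eq_of_bijective toEdge ⟨hinjE, hsurjE⟩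
    rw [Nat.card_eq_fintype_card, Nat.card_coe_set_eq, hedges] at h1
    exact h1
  set eqv : L ≃ Fin h := Fintype.equivFinOfCardEq hcardL with heqv
  set a : Fin h → ZMod p := fun m => g (cIdx (eqv.symm m).1 (eqv.symm m).2) with ha
  have hhp : h < p := by
    have := hp.two_le
    omega
  obtain ⟨φ, hφS, hφinj, hsuminj⟩ :=
    RainbowAux.exists_injective_add p hhp S (le_of_eq hScard.symm) a
  set f₁ : V → ZMod p := fun v =>
    if hv : v ∈ Set.range x then g hv.choose
    else a (eqv ⟨v, hv⟩) + φ (eqv ⟨v, hv⟩) with hf₁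
  have hf₁center : ∀ i : Fin k, f₁ (x i) = g i := by
    intro i
    have hmem : x i ∈ Set.range x := ⟨i, rfl⟩
    simp only [hf₁]
    rw [dif_pos hmem]
    congr 1
    exact hx hmem.choose_spec
  have hf₁leaf : ∀ (v : V) (hv : v ∉ Set.range x),
      f₁ v = a (eqv ⟨v, hv⟩) + φ (eqv ⟨v, hv⟩) := by
    intro v hv
    simp only [hf₁]
    rw [dif_neg hv]
  have ha_eq : ∀ (v : V) (hv : v ∉ Set.range x), a (eqv ⟨v, hv⟩) = g (cIdx v hv) := by
    intro v hv
    simp only [ha, Equiv.symm_apply_apply]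
  have hleaf_of_adj : ∀ (i : Fin k) (v : V), F.Adj (x i) v → v ∉ Set.range x := by
    intro i v hadj
    rintro ⟨j, rfl⟩
    exact hcenters i j hadj
  have hdiff : ∀ (i : Fin k) (v : V) (hadj : F.Adj (x i) v),
      f₁ v - f₁ (x i) = φ (eqv ⟨v, hleaf_of_adj i v hadj⟩) := by
    intro i v hadj
    have hv := hleaf_of_adj i v hadj
    rw [hf₁leaf v hv, ha_eq v hv, hcenter_unique v hv i hadj, hf₁center i]
    exact add_sub_cancel_left _ _
  refine ⟨f₁, hf₁center, ?_, ?_, ?_⟩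
  · intro i v hadj
    rw [hdiff i v hadj]
    exact hφS _
  · intro i j v w hav haw heq
    rw [hdiff i v hav, hdiff j w haw] at heq
    have h1 := hφinj heq
    have h2 : (⟨v, hleaf_of_adj i v hav⟩ : L) = ⟨w, hleaf_of_adj j w haw⟩ := eqv.injective h1
    have hvw : v = w := Subtype.ext_iff.mp h2
    subst hvw
    refine ⟨?_, rfl⟩
    have hv := hleaf_of_adj i v hav
    exact ((hcenter_unique v hv i hav).symm.trans (hcenter_unique v hv j haw))
  · intro v w hv hw heq
    rw [hf₁leaf v hv, hf₁leaf w hw] at heq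
    have h1 : eqv ⟨v, hv⟩ = eqv ⟨w, hw⟩ := hsuminj heq
    exact Subtype.ext_iff.mp (eqv.injective h1)
end

section
/- Let r ≥ 2 be an integer. Let M_a be the r × r matrix with entry r(i−1) + j in row i and column j (so its entries, read row by row, are 1, 2, …, r²), and let M_b be an r × r matrix whose entries σ_1, …, σ_{r²} (read row by row) form a permutation of {1, …, r²}. Then one can permute the entries within each column of the r × 2r matrix M = (M_a | M_b) (independently in each of the 2r columns) so that in the resulting matrix M′ no row contains a repeated entry. -/
open Finset

/-- Hall-type lemma: a permutation avoiding a (partially) constrained function exists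
unless the constraint set is everything and the function constant on it. -/
lemma exists_perm_avoid_aux {r : ℕ} (hr : 2 ≤ r) (D : Finset (Fin r)) (t : Fin r → Fin r)
    (hyp : D ≠ Finset.univ ∨ ∃ p ∈ D, ∃ p' ∈ D, t p ≠ t p') :
    ∃ σ : Equiv.Perm (Fin r), ∀ p ∈ D, σ p ≠ t p := by
  classical
  set T : Fin r → Finset (Fin r) :=
    fun x => if x ∈ D then Finset.univ \ {t x} else Finset.univ with hT
  have hall : ∀ s : Finset (Fin r), s.card ≤ (s.biUnion T).card := by
    intro s
    rcases s.eq_empty_or_nonempty with hs | ⟨x, hx⟩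
    · simp [hs]
    by_cases h1 : ∃ y ∈ s, y ∉ D
    · obtain ⟨y, hy, hyD⟩ := h1
      have : Finset.univ ⊆ s.biUnion T := by
        intro w _
        exact Finset.mem_biUnion.mpr ⟨y, hy, by simp [hT, hyD]⟩
      calc s.card ≤ Finset.univ.card := Finset.card_le_card (Finset.subset_univ s)
        _ ≤ (s.biUnion T).card := Finset.card_le_card this
    · push_neg at h1
      by_cases h2 : ∃ y ∈ s, ∃ z ∈ s, t y ≠ t z
      · obtain ⟨y, hy, z, hz, hyz⟩ := h2
        have : Finset.univ ⊆ s.biUnion T := by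
          intro w _
          by_cases hw : w = t y
          · refine Finset.mem_biUnion.mpr ⟨z, hz, ?_⟩
            simp only [hT, if_pos (h1 z hz), Finset.mem_sdiff, Finset.mem_univ,
              Finset.mem_singleton, true_and]
            rw [hw]
            exact hyz
          · refine Finset.mem_biUnion.mpr ⟨y, hy, ?_⟩
            simp only [hT, if_pos (h1 y hy), Finset.mem_sdiff, Finset.mem_univ,
              Finset.mem_singleton, true_and]
            exact hw
        calc s.card ≤ Finset.univ.card := Finset.card_le_card (Finset.subset_univ s)
          _ ≤ (s.biUnion T).card := Finset.card_le_card this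
      · push_neg at h2
        -- t is constant on s, s ⊆ D
        have hsub : Finset.univ \ {t x} ⊆ s.biUnion T := by
          intro w hw
          refine Finset.mem_biUnion.mpr ⟨x, hx, ?_⟩
          simp only [hT, if_pos (h1 x hx)]
          exact hw
        have hcard1 : r - 1 ≤ (s.biUnion T).card := by
          have := Finset.card_le_card hsub
          simpa [Finset.card_sdiff_of_subset (by simp : {t x} ⊆ Finset.univ)] using this
        have hsne : s ≠ Finset.univ := by
          intro hs
          rcases hyp with h | ⟨p, hp, p', hp', hne⟩
          · exact h (Finset.eq_univ_iff_forall.mpr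
              (fun y => h1 y (hs ▸ Finset.mem_univ y)))
          · exact hne (h2 p (hs ▸ Finset.mem_univ p) p' (hs ▸ Finset.mem_univ p'))
        have hslt : s.card < r := by
          have hle : s.card ≤ r := by
            simpa using Finset.card_le_card (Finset.subset_univ s)
          rcases lt_or_eq_of_le hle with h | h
          · exact h
          · exact absurd (Finset.eq_univ_of_card s (by simpa using h)) hsne
        omega
  obtain ⟨f, hfinj, hf⟩ := (Finset.all_card_le_biUnion_card_iff_exists_injective T).mp hall
  refine ⟨Equiv.ofBijective f (Finite.injective_iff_bijective.mp hfinj), ?_⟩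
  intro p hp
  have := hf p
  simp only [hT, if_pos hp, Finset.mem_sdiff, Finset.mem_singleton] at this
  exact this.2

/-- Let `r ≥ 2`. Let `Ma` be the `r × r` matrix whose entries, read row by row, are
`1, 2, …, r²`, and let `Mb` be an `r × r` matrix whose entries form a permutation of
`{1, …, r²}`. Then one can permute the entries within each of the `2r` columns of the
`r × 2r` matrix `(Ma | Mb)` (independently in each column) so that no row of the resulting
matrix contains a repeated entry. -/
theorem column_permutations_no_repeated_row_entries
    (r : ℕ) (hr : 2 ≤ r)
    (Ma Mb : Fin r → Fin r → ℕ)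
    (hMa : ∀ i j : Fin r, Ma i j = r * i.val + j.val + 1)
    (hMb_inj : Function.Injective (fun q : Fin r × Fin r => Mb q.1 q.2))
    (hMb_range : ∀ i j : Fin r, Mb i j ∈ Finset.Icc 1 (r * r)) :
    ∃ πa πb : Fin r → Equiv.Perm (Fin r),
      ∀ i : Fin r, Function.Injective
        (Sum.elim (fun j : Fin r => Ma (πa j i) j) (fun j : Fin r => Mb (πb j i) j)) := by
  classical
  have hr0 : 0 < r := by omega
  -- decoding arithmetic
  have hcode : ∀ b c b' c' : ℕ, c < r → c' < r → r * b + c = r * b' + c' →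
      b = b' ∧ c = c' := by
    intro b c b' c' hc hc' h
    have h1 : (r * b + c) % r = c := by
      simp [Nat.add_mod, Nat.mul_mod_right, Nat.mod_eq_of_lt hc]
    have h2 : (r * b' + c') % r = c' := by
      simp [Nat.add_mod, Nat.mul_mod_right, Nat.mod_eq_of_lt hc']
    have hcc : c = c' := by rw [← h1, ← h2, h]
    subst hcc
    have : r * b = r * b' := by omega
    exact ⟨Nat.eq_of_mul_eq_mul_left hr0 this, rfl⟩
  -- Mb is surjective onto Icc 1 (r*r)
  have hsurj : ∀ v ∈ Finset.Icc 1 (r * r), ∃ p : Fin r × Fin r, Mb p.1 p.2 = v := by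
    intro v hv
    have := Finset.surj_on_of_inj_on_of_card_le
      (s := (Finset.univ : Finset (Fin r × Fin r))) (t := Finset.Icc 1 (r * r))
      (fun p _ => Mb p.1 p.2) (fun p _ => hMb_range p.1 p.2)
      (fun p q _ _ h => hMb_inj h) (by simp [Nat.card_Icc]) v hv
    obtain ⟨p, _, hp⟩ := this
    exact ⟨p, hp.symm⟩
  -- location of each value r*b + c + 1 in Mb
  have hmem : ∀ b c : Fin r, r * b.val + c.val + 1 ∈ Finset.Icc 1 (r * r) := by
    intro b c
    have hb : b.val ≤ r - 1 := by omega
    have hc : c.val ≤ r - 1 := by omega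
    have h1 : r * b.val ≤ r * (r - 1) := Nat.mul_le_mul_left r hb
    have h2 : r * (r - 1) = r * r - r := by
      have := Nat.mul_pred r r
      simpa [Nat.pred_eq_sub_one] using this
    have h3 : r ≤ r * r := Nat.le_mul_of_pos_left r hr0
    simp only [Finset.mem_Icc]
    omega
  have hloc0 : ∀ b c : Fin r, ∃ p : Fin r × Fin r, Mb p.1 p.2 = r * b.val + c.val + 1 :=
    fun b c => hsurj _ (hmem b c)
  choose loc hloc using hloc0
  -- injectivity of loc
  have hloc_inj : ∀ b c b' c' : Fin r, loc b c = loc b' c' → b = b' ∧ c = c' := by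
    intro b c b' c' h
    have hv : r * b.val + c.val + 1 = r * b'.val + c'.val + 1 := by
      rw [← hloc b c, ← hloc b' c', h]
    obtain ⟨h1, h2⟩ := hcode b.val c.val b'.val c'.val c.isLt c'.isLt (by omega)
    exact ⟨Fin.ext h1, Fin.ext h2⟩
  set j0 : Fin r := ⟨0, by omega⟩ with hj0
  set j1 : Fin r := ⟨1, by omega⟩ with hj1
  have hj01 : j0 ≠ j1 := by simp [hj0, hj1, Fin.ext_iff]
  -- the constrained set D and partial target t
  set P : Fin r → Prop :=
    fun p => ∃ c b b' : Fin r, loc b c = (p, j1) ∧ (loc b' c).2 = j0 with hP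
  set D : Finset (Fin r) := Finset.univ.filter P with hD
  have hDt : ∀ p : Fin r, ∃ q : Fin r,
      P p → ∃ c b b', loc b c = (p, j1) ∧ loc b' c = (q, j0) := by
    intro p
    by_cases h : P p
    · obtain ⟨c, b, b', h1, h2⟩ := h
      exact ⟨(loc b' c).1, fun _ => ⟨c, b, b', h1, by rw [← h2]⟩⟩
    · exact ⟨p, fun h' => absurd h' h⟩
  choose t ht using hDt
  -- the hypothesis for Hall on column j1
  have hyp1 : D ≠ Finset.univ ∨ ∃ p ∈ D, ∃ p' ∈ D, t p ≠ t p' := by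
    by_contra hcon
    push_neg at hcon
    obtain ⟨hDuniv, hconst⟩ := hcon
    have hPall : ∀ p : Fin r, P p := by
      intro p
      have : p ∈ D := hDuniv ▸ Finset.mem_univ p
      exact (Finset.mem_filter.mp this).2
    have hall2 : ∀ p : Fin r, ∃ c b b', loc b c = (p, j1) ∧ loc b' c = (t p, j0) :=
      fun p => ht p (hPall p)
    choose cf bf b'f hbf hb'f using hall2
    have hmemD : ∀ p : Fin r, p ∈ D := fun p => hDuniv ▸ Finset.mem_univ p
    set p₀ : Fin r := ⟨0, by omega⟩ with hp₀
    have hcf : ∀ p : Fin r, cf p = cf p₀ := by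
      intro p
      have h1 : t p = t p₀ := hconst p (hmemD p) p₀ (hmemD p₀)
      have h2 : loc (b'f p) (cf p) = loc (b'f p₀) (cf p₀) := by
        rw [hb'f p, hb'f p₀, h1]
      exact (hloc_inj _ _ _ _ h2).2
    have hbfinj : Function.Injective bf := by
      intro p p' h
      have h1 : loc (bf p) (cf p₀) = (p, j1) := by rw [← hcf p]; exact hbf p
      have h2 : loc (bf p') (cf p₀) = (p', j1) := by rw [← hcf p']; exact hbf p'
      have h3 : ((p : Fin r), j1) = ((p' : Fin r), j1) := by rw [← h1, ← h2, h]
      exact (Prod.ext_iff.mp h3).1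
    have hbfsurj := Finite.injective_iff_surjective.mp hbfinj
    obtain ⟨p, hp⟩ := hbfsurj (b'f p₀)
    have h1 : loc (bf p) (cf p₀) = (p, j1) := by rw [← hcf p]; exact hbf p
    have h2 : loc (b'f p₀) (cf p₀) = (t p₀, j0) := hb'f p₀
    rw [hp] at h1
    rw [h1] at h2
    exact hj01 ((Prod.ext_iff.mp h2).2).symm
  obtain ⟨τ, hτ⟩ := exists_perm_avoid_aux hr D t hyp1
  -- the column permutations for Mb
  set πb : Fin r → Equiv.Perm (Fin r) := fun q => if q = j1 then τ⁻¹ else 1 with hπb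
  -- target row of value r*b+c+1
  set H : Fin r → Fin r → Fin r :=
    fun c b => if (loc b c).2 = j1 then τ (loc b c).1 else (loc b c).1 with hH
  have hHrow : ∀ (b c i j : Fin r), loc b c = (πb j i, j) → H c b = i := by
    intro b c i j hloceq
    by_cases hj : j = j1
    · subst hj
      have h1 : πb j1 i = τ⁻¹ i := by simp [hπb]
      rw [h1] at hloceq
      simp [hH, hloceq]
    · have h1 : πb j i = i := by simp [hπb, hj]
      rw [h1] at hloceq
      simp [hH, hloceq, hj]
  -- nonconstancy of H c
  have hHnc : ∀ c : Fin r, ∃ b b', H c b ≠ H c b' := by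
    intro c
    by_cases hcase : ∃ b b' : Fin r, b ≠ b' ∧ (loc b c).2 = (loc b' c).2
    · obtain ⟨b, b', hbb, hcol⟩ := hcase
      have hrow : (loc b c).1 ≠ (loc b' c).1 := by
        intro h
        have : loc b c = loc b' c := Prod.ext h hcol
        exact hbb (hloc_inj _ _ _ _ this).1
      refine ⟨b, b', ?_⟩
      by_cases hcj : (loc b c).2 = j1
      · simp only [hH, if_pos hcj, if_pos (hcol.symm.trans hcj)]
        exact fun h => hrow (τ.injective h)
      · simp only [hH, if_neg hcj, if_neg (fun h => hcj (hcol.trans h))]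
        exact hrow
    · push_neg at hcase
      have hcolinj : Function.Injective (fun b => (loc b c).2) := by
        intro b b' h
        by_contra hne
        exact hcase b b' hne h
      have hcolsurj := Finite.injective_iff_surjective.mp hcolinj
      obtain ⟨b1, hb1⟩ := hcolsurj j1
      obtain ⟨b0, hb0⟩ := hcolsurj j0
      simp only at hb1 hb0
      have hloc1 : loc b1 c = ((loc b1 c).1, j1) := Prod.ext rfl hb1
      have hpP : P ((loc b1 c).1) := ⟨c, b1, b0, hloc1, hb0⟩
      have hpD : (loc b1 c).1 ∈ D := Finset.mem_filter.mpr ⟨Finset.mem_univ _, hpP⟩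
      obtain ⟨C, B, B', hB, hB'⟩ := ht ((loc b1 c).1) hpP
      have hBC : B = b1 ∧ C = c := hloc_inj _ _ _ _ (by rw [hB, ← hloc1])
      rw [hBC.2] at hB'
      have hB'b0 : B' = b0 := by
        by_contra hne
        have h5 := hcase B' b0 hne
        rw [hB', hb0] at h5
        exact h5 rfl
      rw [hB'b0] at hB'
      refine ⟨b1, b0, ?_⟩
      have h1 : H c b1 = τ ((loc b1 c).1) := by simp [hH, hb1]
      have h2 : H c b0 = (loc b0 c).1 := by
        simp [hH, hb0, hj01]
      have h3 : (loc b0 c).1 = t ((loc b1 c).1) := (Prod.ext_iff.mp hB').1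
      rw [h1, h2, h3]
      exact hτ _ hpD
  -- permutations for Ma columns
  have hσ0 : ∀ c : Fin r, ∃ σ : Equiv.Perm (Fin r), ∀ b, σ b ≠ H c b := by
    intro c
    obtain ⟨b, b', hbb'⟩ := hHnc c
    obtain ⟨σ, hσ⟩ := exists_perm_avoid_aux hr Finset.univ (H c)
      (Or.inr ⟨b, Finset.mem_univ b, b', Finset.mem_univ b', hbb'⟩)
    exact ⟨σ, fun x => hσ x (Finset.mem_univ x)⟩
  choose σ hσ using hσ0
  refine ⟨fun c => (σ c)⁻¹, πb, ?_⟩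
  intro i
  -- cross lemma: Ma entry never equals Mb entry in row i
  have hcross : ∀ c j : Fin r, Ma ((σ c)⁻¹ i) c ≠ Mb (πb j i) j := by
    intro c j heq
    set b : Fin r := (σ c)⁻¹ i with hb
    have h1 : Ma b c = Mb (loc b c).1 (loc b c).2 := by
      rw [hMa, hloc]
    have h2 : Mb (loc b c).1 (loc b c).2 = Mb (πb j i) j := by rw [← h1, heq]
    have h3 : loc b c = (πb j i, j) :=
      hMb_inj (show (fun q : Fin r × Fin r => Mb q.1 q.2) (loc b c) =
        (fun q : Fin r × Fin r => Mb q.1 q.2) (πb j i, j) from h2)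
    have h4 : H c b = i := hHrow b c i j h3
    have h5 : σ c b = i := by simp [hb]
    exact hσ c b (h5.trans h4.symm)
  intro x y hxy
  match x, y with
  | Sum.inl c, Sum.inl c' =>
    simp only [Sum.elim_inl] at hxy
    rw [hMa, hMa] at hxy
    have := (hcode _ _ _ _ c.isLt c'.isLt (Nat.add_right_cancel hxy)).2
    exact congrArg Sum.inl (Fin.ext this)
  | Sum.inl c, Sum.inr j =>
    simp only [Sum.elim_inl, Sum.elim_inr] at hxy
    exact absurd hxy (hcross c j)
  | Sum.inr j, Sum.inl c =>
    simp only [Sum.elim_inl, Sum.elim_inr] at hxy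
    exact absurd hxy.symm (hcross c j)
  | Sum.inr j, Sum.inr j' =>
    simp only [Sum.elim_inr] at hxy
    have h6 : ((πb j i : Fin r), j) = ((πb j' i : Fin r), j') :=
      hMb_inj (show (fun q : Fin r × Fin r => Mb q.1 q.2) (πb j i, j) =
        (fun q : Fin r × Fin r => Mb q.1 q.2) (πb j' i, j') from hxy)
    exact congrArg Sum.inr (Prod.ext_iff.mp h6).2
end
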